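/- arXiv:2303.16785 — 4 statements merged into one kernel-verified Lean document; each statement's English description precedes it below -/
import Mathlib

section
/- In the module of functions $\mathbb{Z}^n \to \mathbb{Z}[y]$ over the group algebra $\mathbb{Z}[y][\mathbb{Z}^n]$, the convolution of $\phi$ with $\prod_{i=1}^n (1 - \chi^{m_i})$ equals the finitely supported function $\prod_{i=1}^n (1 + y\,\chi^{m_i})$; that is, $\Big(\prod_{i=1}^n (1 - \chi^{m_i})\Big)\cdot \phi \;=\; \prod_{i=1}^n (1 + y\,\chi^{m_i})$, where the right-hand side is expanded in $\mathbb{Z}[y][\mathbb{Z}^n]$. (In particular the weighted cone character sum $\phi$ is summable with this sum.) -/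
open Classical

noncomputable section

/-- An element of the group algebra `ℤ[y][ℤ^n]`, viewed as a finitely supported function. -/
def MAfun {n : ℕ} (g : AddMonoidAlgebra (Polynomial ℤ) (Fin n → ℤ)) :
    (Fin n → ℤ) →₀ Polynomial ℤ := g.coeff

/-- Convolution of a finitely supported function (an element of the group algebra
`ℤ[y][ℤ^n]`) with an arbitrary function `ℤ^n → ℤ[y]`. -/
def conv {n : ℕ} (g : AddMonoidAlgebra (Polynomial ℤ) (Fin n → ℤ))
    (φ : (Fin n → ℤ) → Polynomial ℤ) : (Fin n → ℤ) → Polynomial ℤ :=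
  fun x => ∑ m ∈ (MAfun g).support, MAfun g m * φ (x - m)

namespace Stmt2Aux

open Finset Polynomial

variable {n : ℕ}

/-- The local factor of `φ`. -/
def f (t : ℤ) : Polynomial ℤ :=
  if 0 ≤ t then (if t = 0 then 1 else 1 + X) else 0

lemma f_step (t : ℤ) :
    f t - f (t - 1) = (if t = 1 then X else 0) + (if t = 0 then 1 else 0) := by
  unfold f
  split_ifs <;> first | (exfalso; omega) | ring

lemma expand (v : Fin n → (Fin n → ℤ)) (c : Fin n → Polynomial ℤ) :
    (∏ i, (1 + AddMonoidAlgebra.single (v i) (c i)) :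
      AddMonoidAlgebra (Polynomial ℤ) (Fin n → ℤ)) =
    ∑ T ∈ Finset.univ.powerset,
      AddMonoidAlgebra.single (∑ i ∈ T, v i) (∏ i ∈ T, c i) := by
  simp_rw [add_comm (1 : AddMonoidAlgebra (Polynomial ℤ) (Fin n → ℤ))]
  rw [Finset.prod_add]
  refine Finset.sum_congr rfl fun T _ => ?_
  rw [Finset.prod_const_one, mul_one, AddMonoidAlgebra.prod_single]

lemma conv_eq (g : AddMonoidAlgebra (Polynomial ℤ) (Fin n → ℤ))
    (φ : (Fin n → ℤ) → Polynomial ℤ) (x : Fin n → ℤ) :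
    conv g φ x = g.coeff.sum fun m p => p * φ (x - m) := rfl

lemma phi_eq (b : Module.Basis (Fin n) ℤ (Fin n → ℤ)) (x : Fin n → ℤ) :
    (if ∀ i, 0 ≤ b.repr x i
      then (1 + X) ^ (Finset.univ.filter fun i => b.repr x i ≠ 0).card
      else 0) = ∏ i, f (b.repr x i) := by
  split_ifs with h
  · have key : ∀ i : Fin n, f (b.repr x i) = if b.repr x i ≠ 0 then 1 + X else 1 := by
      intro i
      unfold f
      rw [if_pos (h i)]
      by_cases hi : b.repr x i = 0 <;> simp [hi]
    simp_rw [key]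
    rw [Finset.prod_ite, Finset.prod_const, Finset.prod_const_one, mul_one]
  · push_neg at h
    obtain ⟨i, hi⟩ := h
    symm
    apply Finset.prod_eq_zero (Finset.mem_univ i)
    unfold f
    rw [if_neg (not_le.mpr hi)]

lemma repr_sum (b : Module.Basis (Fin n) ℤ (Fin n → ℤ)) (T : Finset (Fin n)) (j : Fin n) :
    b.repr (∑ i ∈ T, b i) j = if j ∈ T then 1 else 0 := by
  rw [map_sum, Finsupp.finset_sum_apply]
  simp [Module.Basis.repr_self, Finsupp.single_apply]

lemma sum_eq_iff (b : Module.Basis (Fin n) ℤ (Fin n → ℤ)) (T : Finset (Fin n)) (x : Fin n → ℤ) :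
    (∑ i ∈ T, b i) = x ↔ ∀ j, b.repr x j = if j ∈ T then 1 else 0 := by
  constructor
  · rintro rfl j; exact repr_sum b T j
  · intro h
    apply b.repr.injective
    ext j
    rw [repr_sum b T j, h j]

end Stmt2Aux

open Stmt2Aux Finset Polynomial in
theorem stmt2 (n : ℕ) (b : Module.Basis (Fin n) ℤ (Fin n → ℤ))
    (φ : (Fin n → ℤ) → Polynomial ℤ)
    (hφ : φ = fun x => if ∀ i, 0 ≤ b.repr x i
      then (1 + Polynomial.X) ^ (Finset.univ.filter fun i => b.repr x i ≠ 0).card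
      else 0) :
    conv (∏ i, (1 - AddMonoidAlgebra.single (b i) 1)) φ =
      fun x => MAfun (∏ i, (1 + AddMonoidAlgebra.single (b i) Polynomial.X)) x := by
  have hφ' : ∀ x, φ x = ∏ i, f (b.repr x i) := by
    intro x; rw [hφ]; exact phi_eq b x
  have hL : (∏ i, (1 - AddMonoidAlgebra.single (b i) (1 : Polynomial ℤ))) =
      ∑ T ∈ Finset.univ.powerset,
        AddMonoidAlgebra.single (∑ i ∈ T, b i) ((-1 : Polynomial ℤ) ^ T.card) := by
    have h1 : ∀ i : Fin n,
        (1 - AddMonoidAlgebra.single (b i) (1 : Polynomial ℤ)) =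
          1 + AddMonoidAlgebra.single (b i) (-1 : Polynomial ℤ) := by
      intro i
      rw [sub_eq_add_neg, ← AddMonoidAlgebra.single_neg]
    simp_rw [h1]
    rw [Stmt2Aux.expand]
    refine Finset.sum_congr rfl fun T _ => ?_
    rw [Finset.prod_const]
  funext x
  rw [hL, conv_eq, AddMonoidAlgebra.coeff_sum]
  simp_rw [AddMonoidAlgebra.coeff_single]
  rw [← Finsupp.sum_finsetSum_index (h := fun m p => p * φ (x - m)) (fun m => zero_mul (φ (x - m))) (fun m (p q : Polynomial ℤ) => add_mul p q (φ (x - m)))]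
  have hterm : ∀ T ∈ Finset.univ.powerset,
      (Finsupp.single (∑ i ∈ T, b i) ((-1 : Polynomial ℤ) ^ T.card)).sum
          (fun m p => p * φ (x - m)) =
        (∏ i ∈ T, -(f (b.repr x i - 1))) * ∏ i ∈ Finset.univ \ T, f (b.repr x i) := by
    intro T _
    rw [Finsupp.sum_single_index (zero_mul (φ (x - ∑ i ∈ T, b i)))]
    rw [hφ']
    have : ∀ i : Fin n, b.repr (x - ∑ i ∈ T, b i) i
        = b.repr x i - (if i ∈ T then 1 else 0) := by
      intro i
      rw [map_sub, Finsupp.sub_apply, repr_sum]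
    simp_rw [this]
    rw [← Finset.prod_sdiff (Finset.subset_univ T)]
    have e1 : ∏ i ∈ T, f (b.repr x i - if i ∈ T then 1 else 0)
        = ∏ i ∈ T, f (b.repr x i - 1) :=
      Finset.prod_congr rfl fun i hi => by rw [if_pos hi]
    have e2 : ∏ i ∈ Finset.univ \ T, f (b.repr x i - if i ∈ T then 1 else 0)
        = ∏ i ∈ Finset.univ \ T, f (b.repr x i) :=
      Finset.prod_congr rfl fun i hi => by
        rw [if_neg (Finset.mem_sdiff.mp hi).2, sub_zero]
    have e3 : ∏ i ∈ T, -(f (b.repr x i - 1))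
        = (-1 : Polynomial ℤ) ^ T.card * ∏ i ∈ T, f (b.repr x i - 1) := by
      rw [← Finset.prod_const, ← Finset.prod_mul_distrib]
      exact Finset.prod_congr rfl fun i _ => neg_eq_neg_one_mul _
    rw [e1, e2, e3]; ring
  rw [Finset.sum_congr rfl hterm, ← Finset.prod_add]
  -- Right-hand side
  rw [show MAfun (∏ i, (1 + AddMonoidAlgebra.single (b i) (X : Polynomial ℤ))) = _ from
    congrArg MAfun (Stmt2Aux.expand (fun i => b i) (fun _ => X))]
  unfold MAfun
  rw [AddMonoidAlgebra.coeff_sum]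
  simp_rw [AddMonoidAlgebra.coeff_single]
  rw [Finsupp.finset_sum_apply]
  have hRterm : ∀ T ∈ Finset.univ.powerset,
      (Finsupp.single (∑ i ∈ T, b i) (∏ _i ∈ T, (X : Polynomial ℤ))) x =
        (∏ i ∈ T, (if b.repr x i = 1 then (X : Polynomial ℤ) else 0)) *
          ∏ i ∈ Finset.univ \ T, (if b.repr x i = 0 then (1 : Polynomial ℤ) else 0) := by
    intro T _
    rw [Finsupp.single_apply, Finset.prod_const]
    by_cases h : (∑ i ∈ T, b i) = x
    · have hc := (sum_eq_iff b T x).mp h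
      rw [if_pos h]
      have e1 : ∏ i ∈ T, (if b.repr x i = 1 then (X : Polynomial ℤ) else 0)
          = X ^ T.card := by
        rw [Finset.prod_congr rfl (fun i hi => if_pos (by rw [hc i, if_pos hi])),
          Finset.prod_const]
      have e2 : ∏ i ∈ Finset.univ \ T, (if b.repr x i = 0 then (1 : Polynomial ℤ) else 0)
          = 1 :=
        Finset.prod_congr rfl (fun i hi =>
          if_pos (by rw [hc i, if_neg (Finset.mem_sdiff.mp hi).2])) |>.trans
          (Finset.prod_const_one)
      rw [e1, e2, mul_one]
    · rw [if_neg h]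
      rw [sum_eq_iff b T x] at h
      push_neg at h
      obtain ⟨j, hj⟩ := h
      by_cases hjT : j ∈ T
      · rw [if_pos hjT] at hj
        rw [show (∏ i ∈ T, if b.repr x i = 1 then (X : Polynomial ℤ) else 0) = 0 from
          Finset.prod_eq_zero hjT (if_neg hj), zero_mul]
      · rw [if_neg hjT] at hj
        rw [show (∏ i ∈ Finset.univ \ T, if b.repr x i = 0 then (1 : Polynomial ℤ) else 0) = 0
          from Finset.prod_eq_zero (Finset.mem_sdiff.mpr ⟨Finset.mem_univ j, hjT⟩) (if_neg hj),
          mul_zero]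
  rw [Finset.sum_congr rfl hRterm, ← Finset.prod_add]
  refine Finset.prod_congr rfl fun i _ => ?_
  rw [← f_step]
  ring
end
end

section
/- For every $z \in \mathbb{C}^n$ with $\mathrm{Re}\,\langle w_i, z\rangle < 0$ for all $i$, the function $m \mapsto e^{\langle m, z\rangle}$ is integrable on $T$ and $\int_T e^{\langle m, z\rangle}\, d\lambda(m) \;=\; |\det(w_1,\dots,w_n)|\; e^{\langle v, z\rangle} \prod_{i=1}^n \frac{-1}{\langle w_i, z\rangle}$. -/
open MeasureTheory

noncomputable section

/-- Cast a lattice vector to a real vector. -/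
def castZ {n : ℕ} (x : Fin n → ℤ) : Fin n → ℝ := fun i => (x i : ℝ)

/-- The standard `ℂ`-bilinear pairing between `ℝ^n` and `ℂ^n`. -/
def pairC {n : ℕ} (m : Fin n → ℝ) (z : Fin n → ℂ) : ℂ := ∑ j, (m j : ℂ) * z j

section AuxExp
open Set Filter

lemma aux_integrable {c : ℂ} (hc : c.re < 0) :
    IntegrableOn (fun t : ℝ => Complex.exp (t * c)) (Set.Ici 0) := by
  have hnorm : ∀ t : ℝ, ‖Complex.exp (t * c)‖ = Real.exp (-(-c.re) * t) := by
    intro t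
    simp [Complex.norm_exp, Complex.mul_re, mul_comm]
  rw [integrableOn_Ici_iff_integrableOn_Ioi]
  refine (exp_neg_integrableOn_Ioi (b := -c.re) 0 (by linarith)).mono'
    ((Complex.continuous_ofReal.mul continuous_const).cexp.aestronglyMeasurable.restrict) ?_
  filter_upwards with t
  rw [hnorm]

lemma aux_integral {c : ℂ} (hc : c.re < 0) :
    ∫ t in Set.Ici (0:ℝ), Complex.exp (t * c) = -1 / c := by
  have hc0 : c ≠ 0 := fun h => by simp [h] at hc
  have hderiv : ∀ x ∈ Set.Ici (0:ℝ),
      HasDerivAt (fun t : ℝ => Complex.exp (t * c) / c) (Complex.exp (x * c)) x := by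
    intro x _
    have h1 : HasDerivAt (fun t : ℝ => (t : ℂ) * c) c x := by
      simpa using (Complex.ofRealCLM.hasDerivAt (x := x)).mul_const c
    simpa [mul_div_assoc, div_self hc0] using h1.cexp.div_const c
  have htend : Tendsto (fun t : ℝ => Complex.exp (t * c) / c) atTop (nhds 0) := by
    apply squeeze_zero_norm (a := fun t : ℝ => Real.exp (c.re * t) / ‖c‖)
    · intro t
      simp [Complex.norm_exp, Complex.mul_re, mul_comm]
    · have h1 : Tendsto (fun t : ℝ => c.re * t) atTop atBot :=
        Tendsto.const_mul_atTop_of_neg hc tendsto_id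
      simpa using (Real.tendsto_exp_atBot.comp h1).div_const ‖c‖
  have := integral_Ioi_of_hasDerivAt_of_tendsto' hderiv
    ((aux_integrable hc).mono_set Ioi_subset_Ici_self) htend
  rw [integral_Ici_eq_integral_Ioi, this]
  simp
  ring


end AuxExp

/-- Let `w₁, …, wₙ ∈ ℤ^n` be linearly independent, `v ∈ ℝ^n`, and let
`T = v + {∑ aᵢ wᵢ : aᵢ ≥ 0}` be the shifted full-dimensional simplicial cone with apex `v`.
For every `z ∈ ℂ^n` with `Re ⟨wᵢ, z⟩ < 0` for all `i`, the function `m ↦ e^{⟨m,z⟩}` is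
integrable on `T` and
`∫_T e^{⟨m,z⟩} dλ(m) = |det(w₁,…,wₙ)| · e^{⟨v,z⟩} · ∏ᵢ (-1)/⟨wᵢ,z⟩`. -/
theorem stmt3 (n : ℕ) (w : Fin n → Fin n → ℤ) (v : Fin n → ℝ)
    (hw : LinearIndependent ℝ (fun i => castZ (w i)))
    (T : Set (Fin n → ℝ))
    (hT : T = {x | ∃ a : Fin n → ℝ, (∀ i, 0 ≤ a i) ∧ x = v + ∑ i, a i • castZ (w i)})
    (z : Fin n → ℂ)
    (hz : ∀ i, (pairC (castZ (w i)) z).re < 0) :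
    IntegrableOn (fun m => Complex.exp (pairC m z)) T volume ∧
    ∫ m in T, Complex.exp (pairC m z) ∂volume =
      ((|(Matrix.of fun i j => (w j i : ℝ)).det| : ℝ) : ℂ) * Complex.exp (pairC v z) *
        ∏ i, (-1) / pairC (castZ (w i)) z := by
  set M : Matrix (Fin n) (Fin n) ℝ := Matrix.of fun i j => (w j i : ℝ) with hM
  set S : Set (Fin n → ℝ) := {a | ∀ i, 0 ≤ a i} with hS
  set f : (Fin n → ℝ) → (Fin n → ℝ) := fun a => v + ∑ i, a i • castZ (w i) with hf
  set c : Fin n → ℂ := fun i => pairC (castZ (w i)) z with hc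
  set L' : (Fin n → ℝ) →L[ℝ] (Fin n → ℝ) :=
    LinearMap.toContinuousLinearMap (Matrix.toLin' M) with hL'
  have hSm : MeasurableSet S := by
    have : S = Set.pi Set.univ (fun _ => Set.Ici (0:ℝ)) := by
      ext x; simp [hS, Set.mem_pi, Set.mem_Ici, Pi.le_def]
    rw [this]; exact MeasurableSet.univ_pi fun i => measurableSet_Ici
  have hfl : f = fun a => v + L' a := by
    funext a
    simp only [hf, hL', LinearMap.coe_toContinuousLinearMap', Matrix.toLin'_apply]
    congr 1
    funext k
    simp [Matrix.mulVec, dotProduct, hM, castZ, mul_comm, Finset.sum_apply]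
  have hinj : Function.Injective f := by
    intro a b hab
    have h1 : v + ∑ i, a i • castZ (w i) = v + ∑ i, b i • castZ (w i) := hab
    have h2 : ∑ i, a i • castZ (w i) = ∑ i, b i • castZ (w i) := add_left_cancel h1
    have h0 : ∑ i, (a i - b i) • castZ (w i) = 0 := by
      simp only [sub_smul]
      rw [Finset.sum_sub_distrib, h2, sub_self]
    funext i
    have := Fintype.linearIndependent_iff.mp hw (fun i => a i - b i) h0 i
    linarith [this]
  have hT' : T = f '' S := by
    rw [hT]; ext x
    simp only [Set.mem_setOf_eq, Set.mem_image, hf, hS, eq_comm]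
  have hderiv : ∀ a ∈ S, HasFDerivWithinAt f L' S a := by
    intro a _
    rw [hfl]
    exact ((L'.hasFDerivAt).const_add v).hasFDerivWithinAt
  have hdet : L'.det = M.det := by
    rw [ContinuousLinearMap.det]
    simp only [hL', ContinuousLinearMap.coe_coe, LinearMap.coe_toContinuousLinearMap]
    exact LinearMap.det_toLin' M
  have hpair : ∀ a : Fin n → ℝ, pairC (f a) z = pairC v z + ∑ i, (a i : ℂ) * c i := by
    intro a
    simp only [pairC, hf, hc, Pi.add_apply, Finset.sum_apply, Pi.smul_apply, smul_eq_mul, castZ]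
    push_cast
    simp only [add_mul, Finset.sum_mul]
    rw [Finset.sum_add_distrib, Finset.sum_comm]
    congr 1
    refine Finset.sum_congr rfl fun i _ => ?_
    rw [Finset.mul_sum]
    refine Finset.sum_congr rfl fun j _ => ?_
    ring
  have hexp : ∀ a : Fin n → ℝ, Complex.exp (pairC (f a) z)
      = Complex.exp (pairC v z) * ∏ i, Complex.exp ((a i : ℂ) * c i) := by
    intro a
    rw [hpair a, Complex.exp_add, Complex.exp_sum]
  -- the per-coordinate indicator functions
  set F : Fin n → ℝ → ℂ :=
    fun i => Set.indicator (Set.Ici 0) (fun t : ℝ => Complex.exp (t * c i)) with hF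
  have hFint : ∀ i, Integrable (F i) :=
    fun i => (integrable_indicator_iff measurableSet_Ici).mpr (aux_integrable (hz i))
  have hkey : Set.indicator S (fun x : Fin n → ℝ => ∏ i, Complex.exp ((x i : ℂ) * c i))
      = fun x => ∏ i, F i (x i) := by
    funext x
    simp only [hF]
    by_cases hx : x ∈ S
    · rw [Set.indicator_of_mem hx]
      exact Finset.prod_congr rfl fun i _ =>
        (Set.indicator_of_mem (Set.mem_Ici.mpr (hx i))
          (fun t : ℝ => Complex.exp ((t : ℂ) * c i))).symm
    · rw [Set.indicator_of_notMem hx]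
      obtain ⟨i, hi⟩ := not_forall.mp hx
      symm
      apply Finset.prod_eq_zero (Finset.mem_univ i)
      rw [Set.indicator_of_notMem]
      simpa using hi
  have hprodInt : IntegrableOn (fun x : Fin n → ℝ => ∏ i, Complex.exp ((x i : ℂ) * c i))
      S volume := by
    rw [← integrable_indicator_iff hSm, hkey]
    exact Integrable.fintype_prod hFint
  have heq : (fun x : Fin n → ℝ => |L'.det| • Complex.exp (pairC (f x) z))
      = fun x => (((|M.det| : ℝ) : ℂ) * Complex.exp (pairC v z))
          * (∏ i, Complex.exp ((x i : ℂ) * c i)) := by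
    funext x
    rw [hexp x, hdet, Complex.real_smul]
    ring
  have hintS : IntegrableOn (fun x : Fin n → ℝ =>
      |L'.det| • Complex.exp (pairC (f x) z)) S volume := by
    rw [heq]
    exact hprodInt.const_mul _
  have hIntegrable : IntegrableOn (fun m => Complex.exp (pairC m z)) T volume := by
    rw [hT']
    exact (integrableOn_image_iff_integrableOn_abs_det_fderiv_smul volume hSm hderiv
      hinj.injOn (fun m => Complex.exp (pairC m z))).mpr hintS
  refine ⟨hIntegrable, ?_⟩
  rw [hT', integral_image_eq_integral_abs_det_fderiv_smul volume hSm hderiv hinj.injOn]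
  have hprodval : ∫ x in S, ∏ i, Complex.exp ((x i : ℂ) * c i) ∂volume
      = ∏ i, (-1) / c i := by
    rw [← integral_indicator hSm, hkey]
    rw [MeasureTheory.volume_pi, MeasureTheory.integral_fintype_prod_eq_prod (f := fun i => F i)]
    refine Finset.prod_congr rfl fun i _ => ?_
    rw [hF]
    rw [integral_indicator measurableSet_Ici]
    exact aux_integral (hz i)
  rw [heq, MeasureTheory.integral_const_mul, hprodval]
end
end

section
/- Fix $z \in \mathbb{C}^n$ with $\mathrm{Re}\,\langle m, z\rangle < 0$ for every $m \in C \setminus \{0\}$. Then the family $(e^{\langle m, z\rangle})_{m \in C \cap \mathbb{Z}^n}$ is summable. Moreover, there is a neighborhood $U$ of $0$ in $\mathbb{R}^r$ such that for every $h \in U \cap \mathbb{Q}^r$ the function $m \mapsto e^{\langle m, z\rangle}$ is integrable on $C(h)$, each series $\sum_{m \in k\,C(h) \cap \mathbb{Z}^n} e^{\langle m, z/k\rangle}$ (for a positive integer $k$ with $kh \in \mathbb{Z}^r$, so that $k\,C(h) = C(kh)$ is a lattice cone) converges absolutely, and $\lim_{k \to \infty,\ kh \in \mathbb{Z}^r}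 \frac{1}{k^n} \sum_{m \in k\,C(h) \cap \mathbb{Z}^n} e^{\langle m, z/k\rangle} \;=\; \int_{C(h)} e^{\langle m, z\rangle}\, d\lambda(m)$. -/
open MeasureTheory Filter

noncomputable section

/-- The pairing `⟨m, u⟩ = ∑ i, m i * u i` of a real vector with a lattice vector. -/
def pairR {n : ℕ} (m : Fin n → ℝ) (u : Fin n → ℤ) : ℝ := ∑ i, m i * (u i : ℝ)

/-- The dilated cone `C(t) = {m : ⟨m, uⱼ⟩ + tⱼ ≥ 0 for all j}`. -/
def Cd {n r : ℕ} (u : Fin r → Fin n → ℤ) (t : Fin r → ℝ) : Set (Fin n → ℝ) :=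
  {m | ∀ j, 0 ≤ pairR m (u j) + t j}

namespace Stmt4Aux
open Set

variable {n r : ℕ}

variable {n r : ℕ}

lemma pairR_smul (s : ℝ) (m : Fin n → ℝ) (u : Fin n → ℤ) :
    pairR (s • m) u = s * pairR m u := by
  simp [pairR, Finset.mul_sum, mul_assoc]

lemma pairC_smul (s : ℝ) (m : Fin n → ℝ) (z : Fin n → ℂ) :
    pairC (s • m) z = (s : ℂ) * pairC m z := by
  simp [pairC, Finset.mul_sum, mul_assoc]

lemma pairC_re (m : Fin n → ℝ) (z : Fin n → ℂ) :
    (pairC m z).re = ∑ j, m j * (z j).re := by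
  rw [pairC, Complex.re_sum]
  exact Finset.sum_congr rfl fun j _ => by rw [Complex.re_ofReal_mul]

lemma continuous_pairR (u : Fin n → ℤ) : Continuous fun m : Fin n → ℝ => pairR m u :=
  continuous_finset_sum _ fun i _ => (continuous_apply i).mul continuous_const

lemma continuous_pairC (z : Fin n → ℂ) : Continuous fun m : Fin n → ℝ => pairC m z :=
  continuous_finset_sum _ fun j _ =>
    (Complex.continuous_ofReal.comp (continuous_apply j)).mul continuous_const

lemma isClosed_Cd (u : Fin r → Fin n → ℤ) (t : Fin r → ℝ) : IsClosed (Cd u t) := by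
  have : Cd u t = ⋂ j, {m : Fin n → ℝ | 0 ≤ pairR m (u j) + t j} := by
    ext m; simp [Cd, Set.mem_iInter]
  rw [this]
  exact isClosed_iInter fun j =>
    isClosed_le continuous_const ((continuous_pairR (u j)).add continuous_const)

lemma mem_Cd_smul {u : Fin r → Fin n → ℤ} {t : Fin r → ℝ} {k : ℝ} (hk : 0 < k)
    {y : Fin n → ℝ} :
    y ∈ Cd u (fun j => k * t j) ↔ k⁻¹ • y ∈ Cd u t := by
  have hk' : k ≠ 0 := ne_of_gt hk
  constructor
  · intro h j
    rw [pairR_smul]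
    have := h j
    have h2 : k⁻¹ * (pairR y (u j) + k * t j) = k⁻¹ * pairR y (u j) + t j := by
      field_simp
    simp only at this
    nlinarith [mul_nonneg (le_of_lt (inv_pos.mpr hk)) this]
  · intro h j
    have := h j
    rw [pairR_smul] at this
    have h5 : 0 ≤ k * (k⁻¹ * pairR y (u j) + t j) := mul_nonneg hk.le this
    have h6 : k * (k⁻¹ * pairR y (u j) + t j) = pairR y (u j) + k * t j := by
      field_simp
    simp only
    linarith

/-- Key decay estimate via compactness. -/
lemma exists_decay (u : Fin r → Fin n → ℤ) (z : Fin n → ℂ)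
    (hz : ∀ m ∈ Cd u 0, m ≠ 0 → (pairC m z).re < 0) :
    ∃ c δ : ℝ, 0 < c ∧ 0 < δ ∧ ∀ m : Fin n → ℝ,
      (∀ j, -(δ * ‖m‖) ≤ pairR m (u j)) → (pairC m z).re ≤ -(c * ‖m‖) := by
  have hφ : Continuous fun m : Fin n → ℝ => (pairC m z).re :=
    Complex.continuous_re.comp (continuous_pairC z)
  set S := Metric.sphere (0 : Fin n → ℝ) 1 with hSdef
  have hS : IsCompact S := isCompact_sphere _ _
  -- Step A
  obtain ⟨c, hc, hA⟩ : ∃ c : ℝ, 0 < c ∧ ∀ m ∈ S ∩ Cd u 0, (pairC m z).re ≤ -(2 * c) := by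
    by_cases hne : (S ∩ Cd u 0).Nonempty
    · obtain ⟨m₀, hm₀, hmax⟩ :=
        (hS.inter_right (isClosed_Cd u 0)).exists_isMaxOn hne hφ.continuousOn
      have hm₀ne : m₀ ≠ 0 := by
        intro h
        have := hm₀.1
        rw [h] at this
        simp [hSdef] at this
      have hneg : (pairC m₀ z).re < 0 := by
        have := hz m₀ ?_ hm₀ne
        · exact this
        · simpa [Cd] using fun j => by simpa using hm₀.2 j
      refine ⟨-(pairC m₀ z).re / 2, by linarith, fun m hm => ?_⟩
      have := hmax hm
      simp only [Set.mem_setOf_eq] at this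
      linarith
    · exact ⟨1, one_pos, fun m hm => absurd ⟨m, hm⟩ hne⟩
  -- Step B
  obtain ⟨δ, hδ, hB⟩ : ∃ δ : ℝ, 0 < δ ∧ ∀ m ∈ S,
      (∀ j, -δ ≤ pairR m (u j)) → (pairC m z).re ≤ -c := by
    by_contra hcon
    push_neg at hcon
    have key : ∀ i : ℕ, ∃ m ∈ S, (∀ j, -(1 / (i + 1) : ℝ) ≤ pairR m (u j)) ∧
        -c < (pairC m z).re := by
      intro i
      obtain ⟨m, hm, hj, hre⟩ := hcon (1 / (i + 1)) (by positivity)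
      exact ⟨m, hm, hj, hre⟩
    choose x hxS hxj hxre using key
    obtain ⟨a, haS, ψ, hψ, hψt⟩ := hS.tendsto_subseq hxS
    have haC : a ∈ Cd u 0 := by
      intro j
      have h1 : Tendsto (fun i => pairR (x (ψ i)) (u j)) atTop (nhds (pairR a (u j))) :=
        ((continuous_pairR (u j)).tendsto a).comp hψt
      have h2 : Tendsto (fun i : ℕ => -(1 / (ψ i + 1) : ℝ)) atTop (nhds 0) := by
        have : Tendsto (fun i : ℕ => ((ψ i : ℝ) + 1)) atTop atTop :=
          tendsto_atTop_add_const_right _ 1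
            (tendsto_natCast_atTop_atTop.comp hψ.tendsto_atTop)
        have h3 : Tendsto (fun i : ℕ => (1 : ℝ) / (ψ i + 1)) atTop (nhds 0) :=
          tendsto_const_nhds.div_atTop this
        simpa using h3.neg
      have h4 := le_of_tendsto_of_tendsto' h2 h1 fun i => hxj (ψ i) j
      simpa using h4
    have haRe : -c ≤ (pairC a z).re := by
      have h1 : Tendsto (fun i => (pairC (x (ψ i)) z).re) atTop (nhds ((pairC a z).re)) :=
        (hφ.tendsto a).comp hψt
      exact le_of_tendsto_of_tendsto' tendsto_const_nhds h1 fun i => (hxre (ψ i)).le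
    have := hA a ⟨haS, haC⟩
    linarith
  -- scaling
  refine ⟨c, δ, hc, hδ, fun m hm => ?_⟩
  rcases eq_or_ne m 0 with rfl | hm0
  · simp [pairC]
  · have hnorm : 0 < ‖m‖ := norm_pos_iff.mpr hm0
    set w := ‖m‖⁻¹ • m with hw
    have hwS : w ∈ S := by
      simp [hSdef, hw, norm_smul, abs_of_pos (inv_pos.mpr hnorm),
        inv_mul_cancel₀ (ne_of_gt hnorm)]
    have hwj : ∀ j, -δ ≤ pairR w (u j) := by
      intro j
      rw [hw, pairR_smul]
      have := hm j
      have h2 : ‖m‖⁻¹ * -(δ * ‖m‖) ≤ ‖m‖⁻¹ * pairR m (u j) :=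
        mul_le_mul_of_nonneg_left this (le_of_lt (inv_pos.mpr hnorm))
      calc -δ = ‖m‖⁻¹ * -(δ * ‖m‖) := by
            rw [mul_neg, mul_comm δ, ← mul_assoc, inv_mul_cancel₀ (ne_of_gt hnorm), one_mul]
        _ ≤ _ := h2
    have := hB w hwS hwj
    have hmw : m = ‖m‖ • w := by rw [hw, smul_smul, mul_inv_cancel₀ (ne_of_gt hnorm), one_smul]
    calc (pairC m z).re = ‖m‖ * (pairC w z).re := by
          conv_lhs => rw [hmw]
          simp [pairC_smul, Complex.re_ofReal_mul]
      _ ≤ ‖m‖ * (-c) := mul_le_mul_of_nonneg_left this (norm_nonneg m)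
      _ = -(c * ‖m‖) := by ring


lemma summable_exp_int {b : ℝ} (hb : 0 < b) :
    Summable fun q : ℤ => Real.exp (-(b * |(q : ℝ)|)) := by
  have hgeo : Summable fun m : ℕ => Real.exp (-b) ^ m :=
    summable_geometric_of_lt_one (Real.exp_nonneg _) (Real.exp_lt_one_iff.mpr (by linarith))
  have key : Summable fun m : ℕ => Real.exp (-(b * (m : ℝ))) := by
    refine hgeo.congr fun m => ?_
    rw [← Real.exp_nat_mul]
    ring_nf
  apply Summable.of_nat_of_neg
  · refine key.congr fun m => ?_
    simp only [Int.cast_natCast, abs_of_nonneg (Nat.cast_nonneg (α := ℝ) m)]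
  · refine key.congr fun m => ?_
    simp only [Int.cast_neg, Int.cast_natCast, abs_neg,
      abs_of_nonneg (Nat.cast_nonneg (α := ℝ) m)]

lemma summable_pi_prod (f : ℤ → ℝ) (hf : Summable f) (h0 : 0 ≤ f) :
    Summable fun m : Fin n → ℤ => ∏ i, f (m i) := by
  induction n with
  | zero => exact .of_finite
  | succ n ih =>
    have hprod : Summable fun p : ℤ × (Fin n → ℤ) => f p.1 * ∏ i, f (p.2 i) :=
      Summable.mul_of_nonneg (f := f) (g := fun m : Fin n → ℤ => ∏ i, f (m i)) hf ih h0
        fun _ => Finset.prod_nonneg fun _ _ => h0 _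
    rw [← (Fin.consEquiv (fun _ => ℤ)).summable_iff]
    refine hprod.congr fun p => ?_
    simp [Fin.prod_univ_succ, Fin.consEquiv, Fin.cons_zero, Fin.cons_succ]

lemma summable_exp_lattice {a : ℝ} (ha : 0 < a) :
    Summable fun m : Fin n → ℤ => Real.exp (-(a * ‖castZ m‖)) := by
  rcases Nat.eq_zero_or_pos n with hn | hn
  · subst hn; exact .of_finite
  have hb : 0 < a / n := by positivity
  refine Summable.of_nonneg_of_le (fun _ => (Real.exp_pos _).le) (fun m => ?_)
    (summable_pi_prod (fun q => Real.exp (-(a / n * |(q : ℝ)|)))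
      (summable_exp_int hb) fun _ => (Real.exp_pos _).le)
  rw [← Real.exp_sum]
  apply Real.exp_le_exp.mpr
  have h1 : ∑ i, |((m i : ℤ) : ℝ)| ≤ (n : ℝ) * ‖castZ m‖ := by
    calc ∑ i, |((m i : ℤ) : ℝ)| ≤ ∑ _i : Fin n, ‖castZ m‖ :=
          Finset.sum_le_sum fun i _ => by
            simpa [castZ, Real.norm_eq_abs] using norm_le_pi_norm (castZ m) i
      _ = (n : ℝ) * ‖castZ m‖ := by simp [Finset.sum_const, mul_comm]
  have h2 : ∑ i, -(a / n * |((m i : ℤ) : ℝ)|) = -(a / n * ∑ i, |((m i : ℤ) : ℝ)|) := by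
    rw [Finset.sum_neg_distrib, ← Finset.mul_sum]
  rw [h2]
  have hn' : (0:ℝ) < n := by exact_mod_cast hn
  rw [neg_le_neg_iff]
  calc a / n * ∑ i, |((m i : ℤ) : ℝ)| ≤ a / n * ((n:ℝ) * ‖castZ m‖) := by
        apply mul_le_mul_of_nonneg_left h1 hb.le
    _ = a * ‖castZ m‖ := by field_simp

/-- Uniform upper bound on `C(t)` for small `t`. -/
lemma bound_on_Cd (u : Fin r → Fin n → ℤ) (z : Fin n → ℂ) {c δ : ℝ} (hc : 0 < c) (hδ : 0 < δ)
    (hdecay : ∀ m : Fin n → ℝ,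
      (∀ j, -(δ * ‖m‖) ≤ pairR m (u j)) → (pairC m z).re ≤ -(c * ‖m‖)) :
    ∃ B : ℝ, 0 ≤ B ∧ ∀ (t : Fin r → ℝ), (∀ j, |t j| ≤ 1) → ∀ m ∈ Cd u t,
      (pairC m z).re ≤ -(c * ‖m‖) + B := by
  set Z := ∑ j, |(z j).re| with hZ
  have hZ0 : 0 ≤ Z := Finset.sum_nonneg fun j _ => abs_nonneg _
  refine ⟨1 / δ * (c + Z), by positivity, fun t ht m hm => ?_⟩
  by_cases hcase : 1 ≤ δ * ‖m‖
  · have hj : ∀ j, -(δ * ‖m‖) ≤ pairR m (u j) := by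
      intro j
      have h1 := hm j
      have h2 := (abs_le.mp (ht j)).2
      linarith
    have := hdecay m hj
    have hB : (0:ℝ) ≤ 1 / δ * (c + Z) := by positivity
    linarith
  · push_neg at hcase
    have hm1 : ‖m‖ ≤ 1 / δ := by
      rw [le_div_iff₀ hδ]
      nlinarith
    have hφle : (pairC m z).re ≤ ‖m‖ * Z := by
      rw [pairC_re, hZ, Finset.mul_sum]
      refine Finset.sum_le_sum fun j _ => ?_
      calc m j * (z j).re ≤ |m j * (z j).re| := le_abs_self _
        _ = |m j| * |(z j).re| := abs_mul _ _
        _ ≤ ‖m‖ * |(z j).re| := by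
            have : |m j| ≤ ‖m‖ := by
              simpa [Real.norm_eq_abs] using norm_le_pi_norm m j
            exact mul_le_mul_of_nonneg_right this (abs_nonneg _)
    have h3 : ‖m‖ * Z ≤ 1 / δ * Z := mul_le_mul_of_nonneg_right hm1 hZ0
    have h4 : c * ‖m‖ ≤ c * (1 / δ) := mul_le_mul_of_nonneg_left hm1 hc.le
    have h5 : 1 / δ * (c + Z) = c * (1 / δ) + 1 / δ * Z := by ring
    linarith

lemma integrable_exp_abs {b : ℝ} (hb : 0 < b) :
    Integrable (fun x : ℝ => Real.exp (-(b * |x|))) := by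
  have hmeas : AEStronglyMeasurable (fun x : ℝ => Real.exp (-(b * |x|))) volume :=
    (Real.continuous_exp.comp ((continuous_const.mul continuous_abs).neg)).aestronglyMeasurable
  rw [← integrableOn_univ, ← Set.Iic_union_Ioi (a := (0:ℝ))]
  refine IntegrableOn.union ?_ ?_
  · -- on Iic 0 via reflection
    set e := MeasurableEquiv.neg ℝ with he
    have hee : ∀ x : ℝ, e x = -x := fun x => rfl
    have hmap : (volume : Measure ℝ).restrict (Iic (0:ℝ)) =
        ((volume : Measure ℝ).restrict (Ici (0:ℝ))).map e := by
      have h1 : ((volume : Measure ℝ).map e).restrict (Iic (0:ℝ)) =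
          ((volume : Measure ℝ).restrict (⇑e ⁻¹' (Iic (0:ℝ)))).map e :=
        Measure.restrict_map e.measurable measurableSet_Iic
      have h2 : (volume : Measure ℝ).map e = volume := by
        have := (Measure.measurePreserving_neg (volume : Measure ℝ)).map_eq
        rw [show ⇑e = (Neg.neg : ℝ → ℝ) from rfl]
        exact this
      have h3 : ⇑e ⁻¹' (Iic (0:ℝ)) = Ici (0:ℝ) := by
        ext x; simp [hee]
      rw [h2] at h1
      rw [h1, h3]
    rw [IntegrableOn, hmap, e.measurableEmbedding.integrable_map_iff]
    have h4 : IntegrableOn (fun x : ℝ => Real.exp (-(b * |x|)) : ℝ → ℝ) (Ioi (0:ℝ)) := by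
      refine (exp_neg_integrableOn_Ioi 0 hb).congr_fun (fun x hx => ?_) measurableSet_Ioi
      rw [abs_of_pos hx]; ring_nf
    have h5 : IntegrableOn (fun x : ℝ => Real.exp (-(b * |x|)) : ℝ → ℝ) (Ici (0:ℝ)) :=
      Iff.mpr integrableOn_Ici_iff_integrableOn_Ioi h4
    refine h5.congr_fun (fun x _ => ?_) measurableSet_Ici
    simp [hee]

  · have := exp_neg_integrableOn_Ioi 0 hb
    refine this.congr_fun (fun x hx => ?_) measurableSet_Ioi
    rw [abs_of_pos hx]; ring_nf

lemma integrable_exp_norm {a : ℝ} (ha : 0 < a) :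
    Integrable (fun x : Fin n → ℝ => Real.exp (-(a * ‖x‖))) := by
  have hmeas : AEStronglyMeasurable (fun x : Fin n → ℝ => Real.exp (-(a * ‖x‖))) volume :=
    (Real.continuous_exp.comp ((continuous_const.mul continuous_norm).neg)).aestronglyMeasurable
  rcases Nat.eq_zero_or_pos n with hn | hn
  · subst hn
    have huniv : (volume : Measure (Fin 0 → ℝ)) Set.univ = 1 := by
      rw [← Set.pi_univ Set.univ, volume_pi_pi]
      simp
    refine Integrable.mono' (g := fun _ => (1:ℝ)) ?_ hmeas ?_
    · exact (integrable_const_iff).mpr (Or.inr ⟨by rw [huniv]; exact ENNReal.one_lt_top⟩)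
    · refine Eventually.of_forall fun x => ?_
      have : ‖x‖ = 0 := by
        simp [norm_eq_zero]
        exact Subsingleton.elim _ _
      rw [Real.norm_eq_abs, abs_of_pos (Real.exp_pos _), this]
      simp
  · have hb : 0 < a / n := by positivity
    refine Integrable.mono'
      (g := fun x : Fin n → ℝ => ∏ i, Real.exp (-(a / n * |x i|))) ?_ hmeas ?_
    · exact Integrable.fintype_prod (𝕜 := ℝ) fun i => integrable_exp_abs hb
    · refine Eventually.of_forall fun x => ?_
      rw [Real.norm_eq_abs, abs_of_pos (Real.exp_pos _), ← Real.exp_sum]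
      apply Real.exp_le_exp.mpr
      have h1 : ∑ i, |x i| ≤ (n : ℝ) * ‖x‖ := by
        calc ∑ i, |x i| ≤ ∑ _i : Fin n, ‖x‖ :=
              Finset.sum_le_sum fun i _ => by
                simpa [Real.norm_eq_abs] using norm_le_pi_norm x i
          _ = (n : ℝ) * ‖x‖ := by simp [Finset.sum_const, mul_comm]
      have h2 : ∑ i, -(a / n * |x i|) = -(a / n * ∑ i, |x i|) := by
        rw [Finset.sum_neg_distrib, ← Finset.mul_sum]
      rw [h2, neg_le_neg_iff]
      have hn' : (0:ℝ) < n := by exact_mod_cast hn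
      calc a / n * ∑ i, |x i| ≤ a / n * ((n:ℝ) * ‖x‖) := mul_le_mul_of_nonneg_left h1 hb.le
        _ = a * ‖x‖ := by field_simp

/-- The frontier of `Cd u t` has measure zero. -/
lemma volume_frontier_Cd (u : Fin r → Fin n → ℤ) (hu : ∀ j, u j ≠ 0) (t : Fin r → ℝ) :
    volume (frontier (Cd u t)) = 0 := by
  have hsub : frontier (Cd u t) ⊆ ⋃ j, {m : Fin n → ℝ | pairR m (u j) + t j = 0} := by
    intro x hx
    have hxC : x ∈ Cd u t := (isClosed_Cd u t).frontier_subset hx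
    have hxne : x ∉ interior (Cd u t) := hx.2
    by_contra hnot
    simp only [Set.mem_iUnion, Set.mem_setOf_eq, not_exists] at hnot
    have hxmem : x ∈ {m : Fin n → ℝ | ∀ j, 0 < pairR m (u j) + t j} :=
      fun j => lt_of_le_of_ne (hxC j) (Ne.symm (hnot j))
    have hopen : IsOpen {m : Fin n → ℝ | ∀ j, 0 < pairR m (u j) + t j} := by
      have heq : {m : Fin n → ℝ | ∀ j, 0 < pairR m (u j) + t j} =
          ⋂ j, {m : Fin n → ℝ | 0 < pairR m (u j) + t j} := by
        ext m; simp [Set.mem_iInter]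
      rw [heq]
      refine isOpen_iInter_of_finite fun j => isOpen_lt continuous_const ?_
      exact (continuous_finset_sum _ fun i _ => (continuous_apply i).mul continuous_const).add
        continuous_const
    refine hxne (interior_maximal ?_ hopen hxmem)
    intro m hm j
    exact (hm j).le
  refine measure_mono_null hsub (measure_iUnion_null fun j => ?_)
  set L : (Fin n → ℝ) →ₗ[ℝ] ℝ :=
    { toFun := fun m => pairR m (u j)
      map_add' := fun a b => by simp [pairR, add_mul, Finset.sum_add_distrib]
      map_smul' := fun s a => by simp [pairR, Finset.mul_sum, mul_assoc] } with hL
  have hq : 0 < L (fun i => ((u j i : ℝ))) := by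
    have : L (fun i => ((u j i : ℝ))) = ∑ i, ((u j i : ℝ))^2 := by
      simp [hL, pairR, sq]
    rw [this]
    obtain ⟨i, hi⟩ : ∃ i, u j i ≠ 0 := by
      by_contra hcon
      push_neg at hcon
      exact hu j (funext fun i => hcon i)
    refine Finset.sum_pos' (fun i _ => sq_nonneg _) ⟨i, Finset.mem_univ i, ?_⟩
    have : ((u j i : ℝ)) ≠ 0 := Int.cast_ne_zero.mpr hi
    positivity
  set q := L (fun i => ((u j i : ℝ))) with hqdef
  set x₀ : Fin n → ℝ := (-t j / q) • (fun i => ((u j i : ℝ))) with hx₀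
  have hLx₀ : L x₀ = -t j := by
    rw [hx₀, L.map_smul, ← hqdef, smul_eq_mul]
    field_simp
  have hset : {m : Fin n → ℝ | pairR m (u j) + t j = 0} = {m : Fin n → ℝ | L m = -t j} := by
    ext m
    constructor
    · intro hm; simp only [Set.mem_setOf_eq] at hm ⊢; change pairR m (u j) = -t j; linarith [hm]
    · intro hm; simp only [Set.mem_setOf_eq] at hm ⊢
      have : L m = pairR m (u j) := rfl
      rw [this] at hm; linarith
  rw [hset]
  have hpre : (fun y => x₀ + y) ⁻¹' {m : Fin n → ℝ | L m = -t j} =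
      (LinearMap.ker L : Set (Fin n → ℝ)) := by
    ext y
    simp only [Set.mem_preimage, Set.mem_setOf_eq, SetLike.mem_coe, LinearMap.mem_ker,
      map_add, hLx₀]
    constructor <;> intro h <;> linarith
  have := measure_preimage_add (volume : Measure (Fin n → ℝ)) x₀ {m : Fin n → ℝ | L m = -t j}
  rw [← this, hpre]
  refine Measure.addHaar_submodule _ _ (fun htop => ?_)
  have hker : (fun i => ((u j i : ℝ))) ∈ LinearMap.ker L := htop ▸ Submodule.mem_top
  rw [LinearMap.mem_ker] at hker
  rw [hqdef, hker] at hq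
  exact lt_irrefl 0 hq


def nu (k : ℕ) (x : Fin n → ℝ) : Fin n → ℤ := fun i => ⌈(k : ℝ) * x i⌉ - 1

def box (k : ℕ) (m : Fin n → ℤ) : Set (Fin n → ℝ) :=
  Set.univ.pi fun i => Set.Ioc ((m i : ℝ) / k) (((m i : ℝ) + 1) / k)

lemma measurable_nu (k : ℕ) : Measurable (nu (n := n) k) := by
  refine measurable_pi_lambda _ fun i => ?_
  exact ((measurable_of_countable (fun z : ℤ => z - 1)).comp
    (Int.measurable_ceil.comp (measurable_const.mul (measurable_pi_apply i))))

lemma measurableSet_box (k : ℕ) (m : Fin n → ℤ) : MeasurableSet (box k m) :=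
  MeasurableSet.univ_pi fun i => measurableSet_Ioc

lemma mem_box_iff {k : ℕ} (hk : 0 < k) {m : Fin n → ℤ} {x : Fin n → ℝ} :
    x ∈ box k m ↔ nu k x = m := by
  have hkR : (0:ℝ) < k := by exact_mod_cast hk
  constructor
  · intro hx
    funext i
    have hxi := hx i (Set.mem_univ i)
    simp only [Set.mem_Ioc] at hxi
    have h1 : (m i : ℝ) < (k : ℝ) * x i := by
      rw [div_lt_iff₀ hkR] at hxi
      · linarith [hxi.1]
    have h2 : (k : ℝ) * x i ≤ (m i : ℝ) + 1 := by
      have := hxi.2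
      rw [le_div_iff₀ hkR] at this
      linarith
    have : ⌈(k : ℝ) * x i⌉ = m i + 1 := by
      rw [Int.ceil_eq_iff]
      constructor
      · push_cast; linarith
      · push_cast; linarith
    simp [nu, this]
  · intro hx i _
    have : ⌈(k : ℝ) * x i⌉ = m i + 1 := by
      have := congrFun hx i
      simp only [nu] at this
      omega
    rw [Int.ceil_eq_iff] at this
    simp only [Set.mem_Ioc]
    constructor
    · rw [div_lt_iff₀ hkR]
      have := this.1
      push_cast at this
      linarith
    · rw [le_div_iff₀ hkR]
      have := this.2
      push_cast at this
      linarith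

lemma iUnion_box {k : ℕ} (hk : 0 < k) : (⋃ m : Fin n → ℤ, box k m) = Set.univ := by
  ext x
  simp only [Set.mem_iUnion, Set.mem_univ, iff_true]
  exact ⟨nu k x, (mem_box_iff hk).mpr rfl⟩

lemma pairwise_disjoint_box {k : ℕ} (hk : 0 < k) :
    Pairwise (Function.onFun Disjoint (box (n := n) k)) := by
  intro m m' hmm
  rw [Function.onFun, Set.disjoint_left]
  intro x hx hx'
  exact hmm ((mem_box_iff hk).mp hx ▸ ((mem_box_iff hk).mp hx').symm ▸ rfl)

lemma volume_box {k : ℕ} (hk : 0 < k) (m : Fin n → ℤ) :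
    volume (box k m) = ENNReal.ofReal ((1 : ℝ) / k ^ n) := by
  have hkR : (0:ℝ) < k := by exact_mod_cast hk
  rw [box, volume_pi_pi]
  have h1 : ∀ i : Fin n, volume (Set.Ioc ((m i : ℝ) / k) (((m i : ℝ) + 1) / k)) =
      ENNReal.ofReal (1 / k) := by
    intro i
    rw [Real.volume_Ioc]
    congr 1
    field_simp
    ring
  simp_rw [h1]
  rw [Finset.prod_const, ← ENNReal.ofReal_pow (by positivity)]
  congr 1
  rw [div_pow, one_pow, Finset.card_univ, Fintype.card_fin]

lemma nu_bounds {k : ℕ} (hk : 0 < k) (x : Fin n → ℝ) (i : Fin n) :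
    (k : ℝ) * x i - 1 ≤ ((nu k x i : ℤ) : ℝ) ∧ ((nu k x i : ℤ) : ℝ) < (k : ℝ) * x i := by
  have h1 := Int.ceil_lt_add_one ((k : ℝ) * x i)
  have h2 := Int.le_ceil ((k : ℝ) * x i)
  have hcast : ((nu k x i : ℤ) : ℝ) = ((⌈(k : ℝ) * x i⌉ : ℤ) : ℝ) - 1 := by
    simp [nu]
  constructor <;> rw [hcast] <;> linarith

lemma dist_nu_le {k : ℕ} (hk : 0 < k) (x : Fin n → ℝ) :
    ‖(k : ℝ)⁻¹ • castZ (nu k x) - x‖ ≤ 1 / k := by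
  have hkR : (0:ℝ) < k := by exact_mod_cast hk
  refine pi_norm_le_iff_of_nonneg (by positivity) |>.mpr fun i => ?_
  have hb := nu_bounds hk x i
  have hinv : (0:ℝ) < (k:ℝ)⁻¹ := inv_pos.mpr hkR
  have hkk : (k:ℝ)⁻¹ * (k:ℝ) = 1 := inv_mul_cancel₀ (ne_of_gt hkR)
  have hl : (k:ℝ)⁻¹ * ((k : ℝ) * x i - 1) ≤ (k:ℝ)⁻¹ * ((nu k x i : ℤ) : ℝ) :=
    mul_le_mul_of_nonneg_left hb.1 hinv.le
  have hr : (k:ℝ)⁻¹ * ((nu k x i : ℤ) : ℝ) ≤ (k:ℝ)⁻¹ * ((k : ℝ) * x i) :=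
    mul_le_mul_of_nonneg_left hb.2.le hinv.le
  have hsimp : ((k : ℝ)⁻¹ • castZ (nu k x) - x) i = (k:ℝ)⁻¹ * ((nu k x i : ℤ) : ℝ) - x i := by
    simp [castZ]
  have e1 : (k:ℝ)⁻¹ * ((k:ℝ) * x i) = x i := by field_simp
  have e3 : (k:ℝ)⁻¹ * ((k:ℝ) * x i - 1) = x i - (k:ℝ)⁻¹ := by field_simp
  have e4 : (1:ℝ) / (k:ℝ) = (k:ℝ)⁻¹ := one_div _
  rw [Real.norm_eq_abs, hsimp, abs_le]
  constructor <;> linarith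

lemma tendsto_nu (x : Fin n → ℝ) :
    Tendsto (fun k : ℕ => (k : ℝ)⁻¹ • castZ (nu k x)) atTop (nhds x) := by
  rw [tendsto_iff_dist_tendsto_zero]
  have h1 : Tendsto (fun k : ℕ => 1 / (k:ℝ)) atTop (nhds 0) :=
    tendsto_one_div_atTop_nhds_zero_nat
  refine squeeze_zero' ?_ ?_ h1
  · filter_upwards with k
    exact dist_nonneg
  · filter_upwards [eventually_gt_atTop 0] with k hk
    rw [dist_eq_norm]
    exact dist_nu_le hk x


lemma pairC_inv_smul (k : ℕ) (hk : 0 < k) (y : Fin n → ℝ) (z : Fin n → ℂ) :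
    pairC y (fun i => z i / (k : ℂ)) = pairC ((k : ℝ)⁻¹ • y) z := by
  unfold pairC
  refine Finset.sum_congr rfl fun j _ => ?_
  have hkC : ((k : ℂ)) ≠ 0 := by
    exact_mod_cast Nat.cast_ne_zero.mpr (Nat.pos_iff_ne_zero.mp hk)
  simp only [Pi.smul_apply, smul_eq_mul, Complex.ofReal_mul, Complex.ofReal_inv,
    Complex.ofReal_natCast]
  field_simp

lemma norm_exp_pairC (y : Fin n → ℝ) (z : Fin n → ℂ) :
    ‖Complex.exp (pairC y z)‖ = Real.exp ((pairC y z).re) := by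
  rw [Complex.norm_exp]

lemma norm_inv_smul (k : ℕ) (hk : 0 < k) (y : Fin n → ℝ) :
    ‖(k : ℝ)⁻¹ • y‖ = (k : ℝ)⁻¹ * ‖y‖ := by
  have hkR : (0:ℝ) < k := by exact_mod_cast hk
  rw [norm_smul, Real.norm_eq_abs, abs_of_pos (inv_pos.mpr hkR)]

end Stmt4Aux

open Stmt4Aux

/-- Let `C = {m : ⟨m,uⱼ⟩ ≥ 0}` be a full-dimensional pointed rational
polyhedral cone, and fix `z ∈ ℂ^n` with `Re ⟨m,z⟩ < 0` for all `m ∈ C \ {0}`.  Then the family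
`(e^{⟨m,z⟩})_{m ∈ C ∩ ℤ^n}` is summable.  Moreover, there is a neighborhood `U` of `0` in `ℝ^r`
such that for every rational `h ∈ U`, the function `m ↦ e^{⟨m,z⟩}` is integrable on `C(h)`,
each series `∑_{m ∈ kC(h) ∩ ℤ^n} e^{⟨m,z/k⟩}` (for positive integers `k` with `kh ∈ ℤ^r`,
so that `kC(h) = C(kh)`) converges absolutely, and
`lim_{k → ∞, kh ∈ ℤ^r} k⁻ⁿ ∑_{m ∈ kC(h) ∩ ℤ^n} e^{⟨m,z/k⟩} = ∫_{C(h)} e^{⟨m,z⟩} dλ(m)`. -/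
theorem stmt4 (n r : ℕ) (u : Fin r → Fin n → ℤ) (hu : ∀ j, u j ≠ 0)
    (hfull : (interior (Cd u 0)).Nonempty)
    (hpointed : Cd u 0 ∩ (-(Cd u 0)) = {0})
    (z : Fin n → ℂ) (hz : ∀ m ∈ Cd u 0, m ≠ 0 → (pairC m z).re < 0) :
    Summable (fun m : {x : Fin n → ℤ // castZ x ∈ Cd u 0} =>
      Complex.exp (pairC (castZ m.1) z)) ∧
    ∃ U ∈ nhds (0 : Fin r → ℝ), ∀ h : Fin r → ℚ, (fun j => (h j : ℝ)) ∈ U →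
      IntegrableOn (fun m => Complex.exp (pairC m z)) (Cd u fun j => (h j : ℝ)) volume ∧
      (∀ k : ℕ, 0 < k → (∀ j, ∃ a : ℤ, (k : ℚ) * h j = (a : ℚ)) →
        Summable (fun m : {x : Fin n → ℤ // castZ x ∈ Cd u fun j => (k : ℝ) * (h j : ℝ)} =>
          Complex.exp (pairC (castZ m.1) fun i => z i / (k : ℂ)))) ∧
      Tendsto
        (fun k : ℕ => (1 / (k : ℂ) ^ n) *
          ∑' m : {x : Fin n → ℤ // castZ x ∈ Cd u fun j => (k : ℝ) * (h j : ℝ)},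
            Complex.exp (pairC (castZ m.1) fun i => z i / (k : ℂ)))
        (atTop ⊓ Filter.principal {k : ℕ | 0 < k ∧ ∀ j, ∃ a : ℤ, (k : ℚ) * h j = (a : ℚ)})
        (nhds (∫ m in Cd u fun j => (h j : ℝ), Complex.exp (pairC m z) ∂volume)) := by
  obtain ⟨c, δ, hc, hδ, hdecay⟩ := exists_decay u z hz
  obtain ⟨B, hB0, hbound⟩ := bound_on_Cd u z hc hδ hdecay
  -- generic summability over lattice points of a dilated cone
  have hsubSummable : ∀ (t : Fin r → ℝ), (∀ j, |t j| ≤ 1) → ∀ (k : ℕ), 0 < k →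
      Summable (fun m : {x : Fin n → ℤ // castZ x ∈ Cd u fun j => (k : ℝ) * t j} =>
        Complex.exp (pairC (castZ m.1) fun i => z i / (k : ℂ))) := by
    intro t ht k hk
    have hkR : (0:ℝ) < k := by exact_mod_cast hk
    apply Summable.of_norm
    have hcomp : Summable (fun m : {x : Fin n → ℤ // castZ x ∈ Cd u fun j => (k : ℝ) * t j} =>
        Real.exp B * Real.exp (-(c * (k:ℝ)⁻¹ * ‖castZ m.1‖))) := by
      have h1 : Summable (fun m : Fin n → ℤ =>
          Real.exp B * Real.exp (-(c * (k:ℝ)⁻¹ * ‖castZ m‖))) :=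
        (summable_exp_lattice (by positivity)).mul_left _
      exact h1.subtype _
    refine hcomp.of_nonneg_of_le (fun m => norm_nonneg _) fun m => ?_
    rw [pairC_inv_smul k hk, norm_exp_pairC]
    have hmem : (k:ℝ)⁻¹ • castZ m.1 ∈ Cd u t := (mem_Cd_smul hkR).mp m.2
    have hest := hbound t ht _ hmem
    rw [norm_inv_smul k hk] at hest
    rw [← Real.exp_add]
    apply Real.exp_le_exp.mpr
    linarith [hest]
  constructor
  · -- Part 1
    apply Summable.of_norm
    have hcomp : Summable (fun m : {x : Fin n → ℤ // castZ x ∈ Cd u 0} =>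
        Real.exp B * Real.exp (-(c * ‖castZ m.1‖))) :=
      ((summable_exp_lattice hc).mul_left _).subtype _
    refine hcomp.of_nonneg_of_le (fun m => norm_nonneg _) fun m => ?_
    rw [norm_exp_pairC]
    have hest := hbound 0 (fun j => by norm_num) _ m.2
    rw [← Real.exp_add]
    exact Real.exp_le_exp.mpr (by linarith)
  · refine ⟨Metric.ball (0 : Fin r → ℝ) 1, Metric.ball_mem_nhds _ one_pos, fun h hU => ?_⟩
    set t : Fin r → ℝ := fun j => (h j : ℝ) with htdef
    have ht : ∀ j, |t j| ≤ 1 := by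
      intro j
      have h1 : ‖t‖ < 1 := by simpa [htdef] using mem_ball_zero_iff.mp hU
      have h2 := norm_le_pi_norm t j
      rw [Real.norm_eq_abs] at h2
      linarith
    set f : (Fin n → ℝ) → ℂ := fun m => Complex.exp (pairC m z) with hfdef
    have hfcont : Continuous f := Complex.continuous_exp.comp (continuous_pairC z)
    have hfbound : ∀ m ∈ Cd u t, ‖f m‖ ≤ Real.exp B * Real.exp (-(c * ‖m‖)) := by
      intro m hm
      rw [hfdef, norm_exp_pairC, ← Real.exp_add]
      exact Real.exp_le_exp.mpr (by linarith [hbound t ht m hm])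
    have hbddInt : Integrable (fun x : Fin n → ℝ => Real.exp B * Real.exp (-(c * ‖x‖))) :=
      (integrable_exp_norm hc).const_mul _
    refine ⟨?_, fun k hk _ => hsubSummable t ht k hk, ?_⟩
    · -- integrability on Cd u t
      refine Integrable.mono' hbddInt.integrableOn
        (hfcont.aestronglyMeasurable.restrict) ?_
      exact ae_restrict_of_forall_mem (isClosed_Cd u t).measurableSet hfbound
    · -- the limit
      set L := atTop ⊓ Filter.principal
        {k : ℕ | 0 < k ∧ ∀ j, ∃ a : ℤ, (k : ℚ) * h j = (a : ℚ)} with hLdef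
      set G : ℕ → (Fin n → ℤ) → ℂ := fun k =>
        Set.indicator {m' : Fin n → ℤ | castZ m' ∈ Cd u fun j => (k : ℝ) * t j}
          (fun m' => Complex.exp (pairC (castZ m') fun i => z i / (k : ℂ))) with hGdef
      set F : ℕ → (Fin n → ℝ) → ℂ := fun k x => G k (nu k x) with hFdef
      set bound : (Fin n → ℝ) → ℝ :=
        fun x => Real.exp (B + c) * Real.exp (-(c * ‖x‖)) with hbd
      -- norm bound on G
      have hGnorm : ∀ k : ℕ, 0 < k → ∀ m : Fin n → ℤ,
          ‖G k m‖ ≤ Real.exp B * Real.exp (-(c * (k:ℝ)⁻¹ * ‖castZ m‖)) := by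
        intro k hk m
        have hkR : (0:ℝ) < k := by exact_mod_cast hk
        by_cases hmem : castZ m ∈ Cd u fun j => (k : ℝ) * t j
        · have hmem' : m ∈ {m' : Fin n → ℤ | castZ m' ∈ Cd u fun j => (k : ℝ) * t j} := hmem
          show ‖Set.indicator _ _ m‖ ≤ _
          rw [Set.indicator_of_mem hmem', pairC_inv_smul k hk, norm_exp_pairC, ← Real.exp_add]
          have hest := hbound t ht _ ((mem_Cd_smul hkR).mp hmem)
          rw [norm_inv_smul k hk] at hest
          apply Real.exp_le_exp.mpr
          linarith [hest]
        · have hmem' : m ∉ {m' : Fin n → ℤ | castZ m' ∈ Cd u fun j => (k : ℝ) * t j} := hmem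
          show ‖Set.indicator _ _ m‖ ≤ _
          rw [Set.indicator_of_notMem hmem', norm_zero]
          positivity
      have hGsum : ∀ k : ℕ, 0 < k → Summable (G k) := by
        intro k hk
        apply Summable.of_norm
        refine Summable.of_nonneg_of_le (fun m => norm_nonneg _) (hGnorm k hk) ?_
        have hkR : (0:ℝ) < k := by exact_mod_cast hk
        exact (summable_exp_lattice (by positivity)).mul_left _
      -- uniform bound on F
      have hFnorm : ∀ k : ℕ, 1 ≤ k → ∀ x, ‖F k x‖ ≤ bound x := by
        intro k hk x
        have hk0 : 0 < k := hk
        have hkR : (0:ℝ) < k := by exact_mod_cast hk0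
        by_cases hmem : castZ (nu k x) ∈ Cd u fun j => (k : ℝ) * t j
        · have hmem' : nu k x ∈ {m' : Fin n → ℤ | castZ m' ∈ Cd u fun j => (k : ℝ) * t j} := hmem
          show ‖Set.indicator _ _ (nu k x)‖ ≤ _
          rw [Set.indicator_of_mem hmem', pairC_inv_smul k hk0, norm_exp_pairC]
          show _ ≤ Real.exp (B + c) * Real.exp (-(c * ‖x‖))
          set y := (k:ℝ)⁻¹ • castZ (nu k x) with hy
          have hest := hbound t ht y ((mem_Cd_smul hkR).mp hmem)
          have hdist : ‖y - x‖ ≤ 1 / (k:ℝ) := dist_nu_le hk0 x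
          have hk1 : 1 / (k:ℝ) ≤ 1 := by
            rw [div_le_one hkR]
            exact_mod_cast hk
          have hxy : ‖x‖ - 1 ≤ ‖y‖ := by
            have := norm_sub_norm_le x y
            have h2 : ‖x - y‖ = ‖y - x‖ := norm_sub_rev _ _
            linarith
          rw [← Real.exp_add]
          apply Real.exp_le_exp.mpr
          linarith [hest, mul_le_mul_of_nonneg_left hxy hc.le]
        · have hmem' : nu k x ∉ {m' : Fin n → ℤ | castZ m' ∈ Cd u fun j => (k : ℝ) * t j} := hmem
          show ‖Set.indicator _ _ (nu k x)‖ ≤ _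
          rw [Set.indicator_of_notMem hmem', norm_zero]
          show (0:ℝ) ≤ Real.exp (B + c) * Real.exp (-(c * ‖x‖))
          positivity
      have hboundInt : Integrable bound := (integrable_exp_norm hc).const_mul _
      have hFmeas : ∀ k : ℕ, AEStronglyMeasurable (F k) volume := by
        intro k
        exact ((measurable_of_countable (G k)).comp (measurable_nu k)).aestronglyMeasurable
      have hFint : ∀ k : ℕ, 1 ≤ k → Integrable (F k) := by
        intro k hk
        exact Integrable.mono' hboundInt (hFmeas k) (Eventually.of_forall (hFnorm k hk))
      -- pointwise convergence
      have hae : ∀ᵐ x : Fin n → ℝ,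
          Tendsto (fun k => F k x) L (nhds (Set.indicator (Cd u t) f x)) := by
        have hfr := volume_frontier_Cd u hu t
        rw [← compl_mem_ae_iff] at hfr
        filter_upwards [hfr] with x hx
        have hycond : ∀ k : ℕ, 0 < k →
            ((castZ (nu k x) ∈ Cd u fun j => (k : ℝ) * t j) ↔
              (k:ℝ)⁻¹ • castZ (nu k x) ∈ Cd u t) := by
          intro k hk
          exact mem_Cd_smul (by exact_mod_cast hk)
        have hytend : Tendsto (fun k : ℕ => (k : ℝ)⁻¹ • castZ (nu k x)) atTop (nhds x) :=
          tendsto_nu x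
        refine Tendsto.mono_left ?_ inf_le_left
        by_cases hxS : x ∈ Cd u t
        · have hxint : x ∈ interior (Cd u t) := by
            by_contra hnot
            exact hx ⟨subset_closure hxS, hnot⟩
          have hev : ∀ᶠ k : ℕ in atTop, (k:ℝ)⁻¹ • castZ (nu k x) ∈ interior (Cd u t) :=
            hytend.eventually (isOpen_interior.mem_nhds hxint)
          rw [Set.indicator_of_mem hxS]
          refine Tendsto.congr' ?_ ((hfcont.tendsto x).comp hytend)
          filter_upwards [hev, eventually_gt_atTop 0] with k hkmem hk
          have hmem : castZ (nu k x) ∈ Cd u fun j => (k : ℝ) * t j :=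
            (hycond k hk).mpr (interior_subset hkmem)
          have hmem' : nu k x ∈ {m' : Fin n → ℤ | castZ m' ∈ Cd u fun j => (k : ℝ) * t j} := hmem
          have hFeq : F k x = f ((k:ℝ)⁻¹ • castZ (nu k x)) := by
            show Set.indicator _ _ (nu k x) = _
            rw [Set.indicator_of_mem hmem']
            rw [hfdef, pairC_inv_smul k hk]
          rw [hFeq]
          simp only [Function.comp_apply]
        · have hev : ∀ᶠ k : ℕ in atTop, (k:ℝ)⁻¹ • castZ (nu k x) ∈ (Cd u t)ᶜ :=
            hytend.eventually (((isClosed_Cd u t).isOpen_compl).mem_nhds hxS)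
          rw [Set.indicator_of_notMem hxS]
          refine Tendsto.congr' ?_ tendsto_const_nhds
          filter_upwards [hev, eventually_gt_atTop 0] with k hkmem hk
          have hmem : castZ (nu k x) ∉ Cd u fun j => (k : ℝ) * t j :=
            fun hcon => hkmem ((hycond k hk).mp hcon)
          have hmem' : nu k x ∉ {m' : Fin n → ℤ | castZ m' ∈ Cd u fun j => (k : ℝ) * t j} := hmem
          have hFeq : F k x = (0 : ℂ) := by
            show Set.indicator _ _ (nu k x) = (0 : ℂ)
            rw [Set.indicator_of_notMem hmem']
          exact hFeq.symm
      -- DCT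
      have hDCT : Tendsto (fun k : ℕ => ∫ x, F k x) L
          (nhds (∫ x, Set.indicator (Cd u t) f x)) := by
        refine tendsto_integral_filter_of_dominated_convergence bound
          (Eventually.of_forall hFmeas) ?_ hboundInt hae
        refine Eventually.filter_mono inf_le_left ?_
        filter_upwards [eventually_ge_atTop 1] with k hk
        exact Eventually.of_forall (hFnorm k hk)
      have hind : ∫ x, Set.indicator (Cd u t) f x = ∫ m in Cd u t, f m := by
        rw [integral_indicator (isClosed_Cd u t).measurableSet]
      -- integral identity
      have hintid : ∀ k : ℕ, 0 < k → ∫ x, F k x =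
          (1 / (k : ℂ) ^ n) *
            ∑' m : {x : Fin n → ℤ // castZ x ∈ Cd u fun j => (k : ℝ) * t j},
              Complex.exp (pairC (castZ m.1) fun i => z i / (k : ℂ)) := by
        intro k hk
        have hkR : (0:ℝ) < k := by exact_mod_cast hk
        have h1 : ∫ x, F k x = ∫ x in ⋃ m : Fin n → ℤ, box k m, F k x := by
          rw [iUnion_box hk, setIntegral_univ]
        have h2 : ∫ x in ⋃ m : Fin n → ℤ, box k m, F k x
            = ∑' m : Fin n → ℤ, ∫ x in box k m, F k x :=
          integral_iUnion (measurableSet_box k) (pairwise_disjoint_box hk)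
            ((hFint k hk).integrableOn)
        have h3 : ∀ m : Fin n → ℤ, ∫ x in box k m, F k x = ((1:ℝ) / k ^ n) • G k m := by
          intro m
          have hcongr : ∫ x in box k m, F k x = ∫ _x in box k m, G k m := by
            refine setIntegral_congr_fun (measurableSet_box k m) fun x hx => ?_
            show G k (nu k x) = G k m
            rw [(mem_box_iff hk).mp hx]
          rw [hcongr, setIntegral_const, measureReal_def, volume_box hk m,
            ENNReal.toReal_ofReal (by positivity)]
        have h4 : ∑' m : Fin n → ℤ, ∫ x in box k m, F k x
            = ((1:ℝ) / k ^ n) • ∑' m : Fin n → ℤ, G k m := by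
          rw [tsum_congr h3]
          exact ((hGsum k hk).hasSum.const_smul _).tsum_eq
        have h5 : ∑' m : {x : Fin n → ℤ // castZ x ∈ Cd u fun j => (k : ℝ) * t j},
              Complex.exp (pairC (castZ m.1) fun i => z i / (k : ℂ))
            = ∑' m : Fin n → ℤ, G k m :=
          tsum_subtype {m' : Fin n → ℤ | castZ m' ∈ Cd u fun j => (k : ℝ) * t j}
            (fun m' => Complex.exp (pairC (castZ m') fun i => z i / (k : ℂ)))
        rw [h1, h2, h4, ← h5]
        rw [Complex.real_smul]
        push_cast
        ring
      rw [hind] at hDCT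
      refine Tendsto.congr' ?_ hDCT
      refine Eventually.filter_mono inf_le_left ?_
      filter_upwards [eventually_gt_atTop 0] with k hk
      exact hintid k hk
end
end

section
/- If $j_1,\dots,j_k \in \{1,\dots,r\}$ are pairwise distinct indices such that the corresponding facets of $P$ have empty intersection, $F_{j_1} \cap \dots \cap F_{j_k} = \emptyset$, then the mixed partial derivative $\frac{\partial}{\partial h_{j_1}} \cdots \frac{\partial}{\partial h_{j_k}}\, q_f$ is the zero polynomial; equivalently the mixed derivative of $h \mapsto \int_{P(h)} f\, d\lambda$ in the directions $h_{j_1},\dots,h_{j_k}$ vanishes identically near $h = 0$. -/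
open MeasureTheory

noncomputable section

/-- The polytope `P = {m : ⟨m, uⱼ⟩ + cⱼ ≥ 0 for all j}`. -/
def Pset {n r : ℕ} (u : Fin r → Fin n → ℤ) (c : Fin r → ℤ) : Set (Fin n → ℝ) :=
  {m | ∀ j, 0 ≤ pairR m (u j) + (c j : ℝ)}

/-- The dilated polytope `P(h) = {m : ⟨m, uⱼ⟩ + cⱼ + hⱼ ≥ 0 for all j}`. -/
def Ph {n r : ℕ} (u : Fin r → Fin n → ℤ) (c : Fin r → ℤ) (h : Fin r → ℝ) :
    Set (Fin n → ℝ) :=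
  {m | ∀ j, 0 ≤ pairR m (u j) + (c j : ℝ) + h j}

/-- The `j`-th facet `Fⱼ = {m ∈ P : ⟨m, uⱼ⟩ + cⱼ = 0}` of `P`. -/
def Fface {n r : ℕ} (u : Fin r → Fin n → ℤ) (c : Fin r → ℤ) (j : Fin r) :
    Set (Fin n → ℝ) :=
  {m | m ∈ Pset u c ∧ pairR m (u j) + (c j : ℝ) = 0}

/-- The iterated partial derivative `∂^α` of a polynomial, for a multi-index `α`. -/
def pderivMulti {r : ℕ} (α : Fin r → ℕ) (q : MvPolynomial (Fin r) ℝ) :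
    MvPolynomial (Fin r) ℝ :=
  (List.finRange r).foldl (fun p j => (fun p' => MvPolynomial.pderiv j p')^[α j] p) q

namespace S12
open MvPolynomial

variable {r : ℕ}

def shiftS (S : Finset (Fin r)) : Fin r → MvPolynomial (Fin r ⊕ Fin r) ℝ :=
  fun j => X (Sum.inl j) + if j ∈ S then X (Sum.inr j) else 0

lemma pderiv_inr_shiftS (S : Finset (Fin r)) (j i : Fin r) :
    pderiv (Sum.inr j) (shiftS S i) = if i = j ∧ i ∈ S then 1 else 0 := by
  unfold shiftS
  rw [map_add, pderiv_X_of_ne (by simp : (Sum.inl i : Fin r ⊕ Fin r) ≠ Sum.inr j)]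
  by_cases hiS : i ∈ S
  · by_cases hij : i = j
    · subst hij; simp [hiS, pderiv_X_self]
    · rw [if_pos hiS, pderiv_X_of_ne (by simp [hij] : (Sum.inr i : Fin r ⊕ Fin r) ≠ Sum.inr j)]
      simp [hij]
  · simp [hiS]

lemma pderiv_inr_bind₁ (S : Finset (Fin r)) (j : Fin r) (p : MvPolynomial (Fin r) ℝ) :
    pderiv (Sum.inr j) (bind₁ (shiftS S) p)
      = if j ∈ S then bind₁ (shiftS S) (pderiv j p) else 0 := by
  induction p using MvPolynomial.induction_on with
  | C a => simp
  | add p q hp hq => rw [map_add, map_add, hp, hq]; split <;> simp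
  | mul_X p i hp =>
      rw [map_mul, bind₁_X_right, pderiv_mul, hp, pderiv_inr_shiftS, pderiv_mul]
      by_cases hjS : j ∈ S
      · rw [if_pos hjS, if_pos hjS, map_add, map_mul, map_mul, bind₁_X_right]
        by_cases hij : i = j
        · subst hij
          rw [pderiv_X_self, if_pos ⟨rfl, hjS⟩]
          simp
        · rw [pderiv_X_of_ne hij, if_neg (fun hc : i = j ∧ i ∈ S => hij hc.1)]
          simp
      · rw [if_neg hjS, if_neg hjS, if_neg (fun hc : i = j ∧ i ∈ S => hjS (hc.1 ▸ hc.2)), zero_mul, mul_zero, add_zero]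

def DL (l : List (Fin r)) (p : MvPolynomial (Fin r ⊕ Fin r) ℝ) :
    MvPolynomial (Fin r ⊕ Fin r) ℝ :=
  l.foldl (fun p j => pderiv (Sum.inr j) p) p

def PL (l : List (Fin r)) (p : MvPolynomial (Fin r) ℝ) : MvPolynomial (Fin r) ℝ :=
  l.foldl (fun p j => pderiv j p) p

lemma DL_zero (l : List (Fin r)) : DL l 0 = 0 := by
  induction l with
  | nil => rfl
  | cons j l ih => simp [DL, List.foldl_cons] at ih ⊢; simpa using ih

lemma DL_Cmul (l : List (Fin r)) (a : ℝ) (p : MvPolynomial (Fin r ⊕ Fin r) ℝ) :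
    DL l (C a * p) = C a * DL l p := by
  induction l generalizing p with
  | nil => rfl
  | cons j l ih => simp only [DL, List.foldl_cons] at ih ⊢; rw [pderiv_C_mul, ih]

lemma DL_sum {ι : Type*} (l : List (Fin r)) (s : Finset ι)
    (f : ι → MvPolynomial (Fin r ⊕ Fin r) ℝ) :
    DL l (∑ i ∈ s, f i) = ∑ i ∈ s, DL l (f i) := by
  induction l generalizing f with
  | nil => rfl
  | cons j l ih => simp only [DL, List.foldl_cons] at ih ⊢; rw [map_sum, ih]

lemma DL_bind₁ (l : List (Fin r)) (S : Finset (Fin r)) (p : MvPolynomial (Fin r) ℝ) :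
    DL l (bind₁ (shiftS S) p)
      = if (∀ j ∈ l, j ∈ S) then bind₁ (shiftS S) (PL l p) else 0 := by
  induction l generalizing p with
  | nil => simp [DL, PL]
  | cons j l ih =>
      simp only [DL, List.foldl_cons] at ih ⊢
      rw [pderiv_inr_bind₁]
      by_cases hjS : j ∈ S
      · rw [if_pos hjS]
        rw [ih (pderiv j p)]
        by_cases hl : ∀ i ∈ l, i ∈ S
        · rw [if_pos hl, if_pos (fun a ha => by rcases List.mem_cons.mp ha with h|h; exacts [h ▸ hjS, hl a h])]; rfl
        · rw [if_neg hl, if_neg (by simp [hl] : ¬ ∀ i ∈ j :: l, i ∈ S)]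
      · rw [if_neg hjS, if_neg (by simp [hjS] : ¬ ∀ i ∈ j :: l, i ∈ S)]
        exact DL_zero l

lemma unshift_shift (S : Finset (Fin r)) (p : MvPolynomial (Fin r) ℝ) :
    bind₁ (Sum.elim X (fun _ => (0 : MvPolynomial (Fin r) ℝ))) (bind₁ (shiftS S) p) = p := by
  rw [bind₁_bind₁]
  have : (fun i => bind₁ (Sum.elim X (fun _ => (0 : MvPolynomial (Fin r) ℝ))) (shiftS S i))
      = X := by
    funext i
    simp [shiftS, apply_ite (bind₁ (Sum.elim X (fun _ => (0 : MvPolynomial (Fin r) ℝ))))]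
  rw [this, bind₁_X_left, AlgHom.id_apply]

lemma aeval_eq_eval (x : Fin r → ℝ) (p : MvPolynomial (Fin r) ℝ) :
    aeval x p = eval x p := by
  rw [← coe_aeval_eq_eval]; rfl

lemma eval_bind₁ {σ τ : Type*} (x : τ → ℝ) (g : σ → MvPolynomial τ ℝ) (p : MvPolynomial σ ℝ) :
    eval x (bind₁ g p) = eval (fun i => eval x (g i)) p := by
  have h := aeval_bind₁ (R := ℝ) x g p
  rw [show (aeval x : MvPolynomial τ ℝ →ₐ[ℝ] ℝ) (bind₁ g p) = eval x (bind₁ g p) from by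
    rw [← coe_aeval_eq_eval]; rfl] at h
  rw [h, ← coe_aeval_eq_eval]
  rfl

lemma continuous_evalP {k : ℕ} (f : MvPolynomial (Fin k) ℝ) :
    Continuous fun m : Fin k → ℝ => eval m f := by
  have h := AnalyticOnNhd.eval_continuousLinearMap (ContinuousLinearMap.id ℝ (Fin k → ℝ)) f
  refine continuous_iff_continuousAt.mpr fun x => ?_
  simpa using (h x (Set.mem_univ x)).continuousAt

lemma eq_zero_of_eval_zero_on_open {σ : Type*} [Fintype σ] (p : MvPolynomial σ ℝ)
    {U : Set (σ → ℝ)} (hU : IsOpen U) (hne : U.Nonempty) (hz : ∀ x ∈ U, eval x p = 0) :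
    p = 0 := by
  obtain ⟨x₀, hx₀⟩ := hne
  have hana : AnalyticOnNhd ℝ (fun x : σ → ℝ => eval x p) Set.univ := by
    simpa using AnalyticOnNhd.eval_continuousLinearMap (ContinuousLinearMap.id ℝ (σ → ℝ)) p
  have h0 : (fun x : σ → ℝ => eval x p) =ᶠ[nhds x₀] 0 :=
    Filter.eventually_of_mem (hU.mem_nhds hx₀) hz
  have heq := hana.eqOn_zero_of_preconnected_of_eventuallyEq_zero isPreconnected_univ
    (Set.mem_univ x₀) h0
  refine MvPolynomial.funext fun x => ?_
  simpa using heq (Set.mem_univ x)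

lemma pderivMulti_bridge (J : Finset (Fin r)) (l : List (Fin r)) (q : MvPolynomial (Fin r) ℝ) :
    l.foldl (fun p j => (fun p' => pderiv j p')^[if j ∈ J then 1 else 0] p) q
      = (l.filter (fun j => decide (j ∈ J))).foldl (fun p j => pderiv j p) q := by
  induction l generalizing q with
  | nil => rfl
  | cons j l ih =>
      by_cases hj : j ∈ J
      · simp only [List.foldl_cons, List.filter_cons, hj, if_pos, decide_eq_true_eq,
          Function.iterate_one]
        exact ih _
      · simp only [List.foldl_cons, List.filter_cons, hj, decide_eq_true_eq,
          Function.iterate_zero, id_eq]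
        exact ih _


end S12

namespace S12
open MvPolynomial
variable {r : ℕ}

lemma key_alg (J : Finset (Fin r)) (q : MvPolynomial (Fin r) ℝ)
    (hQ : ∑ S ∈ J.powerset, C ((-1:ℝ)^S.card) * bind₁ (shiftS S) q = 0) :
    PL ((List.finRange r).filter (fun j => decide (j ∈ J))) q = 0 := by
  classical
  set l : List (Fin r) := (List.finRange r).filter (fun j => decide (j ∈ J)) with hldef
  have hl : ∀ j : Fin r, j ∈ l ↔ j ∈ J := by
    intro j; simp [hldef, List.mem_filter, List.mem_finRange]
  have h1 : DL l (∑ S ∈ J.powerset, C ((-1:ℝ)^S.card) * bind₁ (shiftS S) q)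
      = C ((-1:ℝ)^J.card) * bind₁ (shiftS J) (PL l q) := by
    rw [DL_sum]
    have hterm : ∀ S ∈ J.powerset,
        DL l (C ((-1:ℝ)^S.card) * bind₁ (shiftS S) q)
          = if S = J then C ((-1:ℝ)^J.card) * bind₁ (shiftS J) (PL l q) else 0 := by
      intro S hS
      rw [DL_Cmul, DL_bind₁]
      by_cases hSJ : S = J
      · subst hSJ
        rw [if_pos rfl, if_pos (fun j hj => (hl j).mp hj)]
      · rw [if_neg hSJ, if_neg, mul_zero]
        intro hall
        exact hSJ (Finset.Subset.antisymm (Finset.mem_powerset.mp hS)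
          (fun j hj => hall j ((hl j).mpr hj)))
    rw [Finset.sum_congr rfl hterm, Finset.sum_ite_eq' J.powerset J
      (fun _ => C ((-1:ℝ)^J.card) * bind₁ (shiftS J) (PL l q)),
      if_pos (Finset.mem_powerset.mpr Finset.Subset.rfl)]
  rw [hQ, DL_zero] at h1
  have h2 : bind₁ (shiftS J) (PL l q) = 0 := by
    have := congrArg (fun z => C ((-1:ℝ)^J.card) * z) h1.symm
    simpa [← mul_assoc, ← map_mul, ← pow_add, Even.neg_one_pow ⟨J.card, rfl⟩] using this
  have h3 := congrArg (bind₁ (Sum.elim X (fun _ => (0 : MvPolynomial (Fin r) ℝ)))) h2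
  rwa [unshift_shift, map_zero] at h3

end S12


namespace S12

variable {n r : ℕ}

lemma pairR_add (x y : Fin n → ℝ) (u : Fin n → ℤ) :
    pairR (x + y) u = pairR x u + pairR y u := by
  simp [pairR, add_mul, Finset.sum_add_distrib]

lemma pairR_smul (t : ℝ) (x : Fin n → ℝ) (u : Fin n → ℤ) :
    pairR (t • x) u = t * pairR x u := by
  simp [pairR, Finset.mul_sum, mul_assoc]

lemma pairR_sub (x y : Fin n → ℝ) (u : Fin n → ℤ) :
    pairR (x - y) u = pairR x u - pairR y u := by
  simp [pairR, sub_mul, Finset.sum_sub_distrib]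

lemma continuous_pairR (u : Fin n → ℤ) : Continuous fun m : Fin n → ℝ => pairR m u :=
  continuous_finset_sum _ fun i _ => (continuous_apply i).mul continuous_const

lemma isClosed_Ph (u : Fin r → Fin n → ℤ) (c : Fin r → ℤ) (h : Fin r → ℝ) :
    IsClosed (Ph u c h) := by
  have : Ph u c h = ⋂ j, {m : Fin n → ℝ | 0 ≤ pairR m (u j) + (c j : ℝ) + h j} := by
    ext m; simp [Ph, Set.mem_iInter]
  rw [this]
  exact isClosed_iInter fun j => isClosed_le continuous_const
    (((continuous_pairR (u j)).add continuous_const).add continuous_const)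

lemma Ph_bounded (u : Fin r → Fin n → ℤ) (c : Fin r → ℤ)
    (hlat : ∃ S : Finset (Fin n → ℤ), Pset u c = convexHull ℝ (castZ '' ↑S))
    (hfull : (interior (Pset u c)).Nonempty)
    (hprim : ∀ j, Finset.univ.gcd (u j) = 1)
    (hr : 0 < r) :
    ∃ R₁ : ℝ, ∀ z : Fin r → ℝ, (∀ j, z j ≤ 1) → Ph u c z ⊆ Metric.closedBall 0 R₁ := by
  classical
  -- P bounded
  obtain ⟨S0, hS0⟩ := hlat
  have hPbd : Bornology.IsBounded (Pset u c) := by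
    rw [hS0]
    exact isBounded_convexHull.mpr (((S0 : Set (Fin n → ℤ)).toFinite.image castZ).isBounded)
  obtain ⟨R, hR⟩ : ∃ R, Pset u c ⊆ Metric.closedBall 0 R :=
    hPbd.subset_closedBall 0
  -- interior point with positive slacks
  obtain ⟨m₀, hm₀⟩ := hfull
  obtain ⟨ε, hεpos, hball⟩ : ∃ ε > 0, Metric.ball m₀ ε ⊆ Pset u c := by
    rcases Metric.mem_nhds_iff.mp (mem_interior_iff_mem_nhds.mp hm₀) with ⟨ε, hε, hb⟩
    exact ⟨ε, hε, hb⟩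
  have hune : ∀ j, ∃ i, u j i ≠ 0 := by
    intro j
    by_contra hc
    push_neg at hc
    have : Finset.univ.gcd (u j) = 0 := Finset.gcd_eq_zero_iff.mpr fun i _ => hc i
    rw [hprim j] at this
    exact one_ne_zero this
  have hslack₀ : ∀ j, 0 < pairR m₀ (u j) + (c j : ℝ) := by
    intro j
    set v : Fin n → ℝ := castZ (u j) with hv
    have hw : 0 < pairR v (u j) := by
      obtain ⟨i, hi⟩ := hune j
      refine Finset.sum_pos' (fun i _ => mul_self_nonneg _) ⟨i, Finset.mem_univ i, ?_⟩
      exact mul_self_pos.mpr (Int.cast_ne_zero.mpr hi)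
    set τ : ℝ := ε / (2 * (‖v‖ + 1)) with hτ
    have hτpos : 0 < τ := div_pos hεpos (by positivity)
    have hmem : m₀ - τ • v ∈ Pset u c := by
      apply hball
      rw [Metric.mem_ball, dist_eq_norm]
      have : m₀ - τ • v - m₀ = -(τ • v) := by abel
      rw [this, norm_neg, norm_smul, Real.norm_eq_abs, abs_of_pos hτpos]
      have hvnn : (0:ℝ) ≤ ‖v‖ := norm_nonneg v
      rw [hτ]
      rw [div_mul_eq_mul_div]
      rw [div_lt_iff₀ (by positivity)]
      nlinarith
    have h0 : ∀ j', 0 ≤ pairR (m₀ - τ • v) (u j') + (c j' : ℝ) := hmem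
    have h1 : pairR (m₀ - τ • v) (u j) = pairR m₀ (u j) - τ * pairR v (u j) := by
      rw [pairR_sub, pairR_smul]
    have h2 := h0 j
    rw [h1] at h2
    nlinarith
  -- minimum slack
  have huniv : (Finset.univ : Finset (Fin r)).Nonempty := ⟨⟨0, hr⟩, Finset.mem_univ _⟩
  set s : ℝ := Finset.univ.inf' huniv (fun j => pairR m₀ (u j) + (c j : ℝ)) with hsdef
  have hspos : 0 < s := by
    rw [hsdef, Finset.lt_inf'_iff]
    exact fun j _ => hslack₀ j
  have hsle : ∀ j, s ≤ pairR m₀ (u j) + (c j : ℝ) :=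
    fun j => Finset.inf'_le _ (Finset.mem_univ j)
  set a : ℝ := 1 + 1/s with hadef
  have hapos : 0 < a := by positivity
  have hane : a ≠ 0 := ne_of_gt hapos
  refine ⟨‖m₀‖ + a * (R + ‖m₀‖), fun z hz m hm => ?_⟩
  set m' : Fin n → ℝ := m₀ + (1/a) • (m - m₀) with hm'def
  have hm'P : m' ∈ Pset u c := by
    intro j
    have h1 : pairR m' (u j) = pairR m₀ (u j) + (1/a) * (pairR m (u j) - pairR m₀ (u j)) := by
      rw [hm'def, pairR_add, pairR_smul, pairR_sub]
    have h2 := hm j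
    have h3 : -(1:ℝ) ≤ pairR m (u j) + (c j : ℝ) := by
      have hzj := hz j
      have h2' : 0 ≤ pairR m (u j) + (c j : ℝ) + z j := hm j
      linarith
    have h4 := hsle j
    rw [h1]
    have hia : (1:ℝ)/a ≤ 1 := by
      rw [div_le_one hapos]
      rw [hadef]
      nlinarith [one_div_pos.mpr hspos]
    have hiapos : 0 < 1/a := by positivity
    have key : 0 ≤ (pairR m₀ (u j) + (c j : ℝ)) + (1/a) * ((pairR m (u j) + (c j : ℝ)) - (pairR m₀ (u j) + (c j : ℝ))) := by
      have hs1 : (1/s) * s = 1 := one_div_mul_cancel (ne_of_gt hspos)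
      have ha1 : a - 1 = 1/s := by rw [hadef]; ring
      have hmul : 0 ≤ a * ((pairR m₀ (u j) + (c j : ℝ)) + (1/a) * ((pairR m (u j) + (c j : ℝ)) - (pairR m₀ (u j) + (c j : ℝ)))) := by
        have hexp : a * ((pairR m₀ (u j) + (c j : ℝ)) + (1/a) * ((pairR m (u j) + (c j : ℝ)) - (pairR m₀ (u j) + (c j : ℝ))))
            = (a - 1) * (pairR m₀ (u j) + (c j : ℝ)) + (pairR m (u j) + (c j : ℝ)) := by
          field_simp
          ring
        rw [hexp, ha1]
        have : (1/s) * (pairR m₀ (u j) + (c j : ℝ)) ≥ (1/s) * s :=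
          mul_le_mul_of_nonneg_left h4 (le_of_lt (one_div_pos.mpr hspos))
        rw [hs1] at this
        linarith
      nlinarith
    linarith [key]
  have hm'R : ‖m'‖ ≤ R := mem_closedBall_zero_iff.mp (hR hm'P)
  have hdiff : m - m₀ = a • (m' - m₀) := by
    rw [hm'def]
    have : m₀ + (1/a) • (m - m₀) - m₀ = (1/a) • (m - m₀) := by abel
    rw [this, smul_smul, mul_one_div_cancel hane, one_smul]
  rw [mem_closedBall_zero_iff]
  calc ‖m‖ = ‖m₀ + (m - m₀)‖ := by congr 1; abel
    _ ≤ ‖m₀‖ + ‖m - m₀‖ := norm_add_le _ _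
    _ = ‖m₀‖ + a * ‖m' - m₀‖ := by rw [hdiff, norm_smul, Real.norm_eq_abs, abs_of_pos hapos]
    _ ≤ ‖m₀‖ + a * (‖m'‖ + ‖m₀‖) := by
        have := norm_sub_le m' m₀
        nlinarith
    _ ≤ ‖m₀‖ + a * (R + ‖m₀‖) := by nlinarith


lemma exists_delta0 (u : Fin r → Fin n → ℤ) (c : Fin r → ℤ) (J : Finset (Fin r))
    (hJ : (⋂ j ∈ J, Fface u c j) = (∅ : Set (Fin n → ℝ)))
    {R₁ : ℝ} (hR₁ : ∀ z : Fin r → ℝ, (∀ j, z j ≤ 1) → Ph u c z ⊆ Metric.closedBall 0 R₁) :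
    ∃ δ₀ : ℝ, 0 < δ₀ ∧ δ₀ ≤ 1 ∧ ∀ m : Fin n → ℝ,
      ¬((∀ j, -δ₀ ≤ pairR m (u j) + (c j : ℝ)) ∧ ∀ j ∈ J, pairR m (u j) + (c j : ℝ) ≤ δ₀) := by
  classical
  set K : ℕ → Set (Fin n → ℝ) := fun k =>
    {m | (∀ j, -(1/(k+1) : ℝ) ≤ pairR m (u j) + (c j : ℝ)) ∧
      ∀ j ∈ J, pairR m (u j) + (c j : ℝ) ≤ (1/(k+1) : ℝ)} with hKdef
  by_cases hne : ∀ k, (K k).Nonempty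
  · exfalso
    have hsub : ∀ k, K (k+1) ⊆ K k := by
      intro k m hm
      have hlt : (1 / ((k:ℝ)+1+1) : ℝ) ≤ 1/((k:ℝ)+1) := by
        apply one_div_le_one_div_of_le <;> [positivity; linarith]
      obtain ⟨h1, h2⟩ := hm
      constructor
      · intro j
        have := h1 j
        push_cast at this ⊢
        linarith
      · intro j hj
        have := h2 j hj
        push_cast at this ⊢
        linarith
    have hclosed : ∀ k, IsClosed (K k) := by
      intro k
      have : K k = (⋂ j, {m : Fin n → ℝ | -(1/(k+1):ℝ) ≤ pairR m (u j) + (c j : ℝ)}) ∩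
          (⋂ j ∈ J, {m : Fin n → ℝ | pairR m (u j) + (c j : ℝ) ≤ (1/(k+1):ℝ)}) := by
        ext m
        simp [hKdef, Set.mem_iInter]
      rw [this]
      refine IsClosed.inter (isClosed_iInter fun j => ?_) (isClosed_biInter fun j _ => ?_)
      · exact isClosed_le continuous_const ((continuous_pairR (u j)).add continuous_const)
      · exact isClosed_le ((continuous_pairR (u j)).add continuous_const) continuous_const
    have hK0sub : K 0 ⊆ Metric.closedBall 0 R₁ := by
      intro m hm
      refine hR₁ (fun _ => 1) (fun _ => le_refl 1) ?_
      intro j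
      have := hm.1 j
      norm_num at this ⊢
      linarith
    have hcpt : IsCompact (K 0) :=
      (isCompact_closedBall (0 : Fin n → ℝ) R₁).of_isClosed_subset (hclosed 0) hK0sub
    obtain ⟨mI, hmI⟩ :=
      IsCompact.nonempty_iInter_of_sequence_nonempty_isCompact_isClosed K hsub hne hcpt hclosed
    have hmIk : ∀ k, mI ∈ K k := by
      intro k
      exact Set.mem_iInter.mp hmI k
    have hmP : mI ∈ Pset u c := by
      intro j
      by_contra hc
      push_neg at hc
      obtain ⟨k, hk⟩ := exists_nat_one_div_lt (by linarith : (0:ℝ) < -(pairR mI (u j) + (c j : ℝ)))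
      have := (hmIk k).1 j
      push_cast at hk this
      linarith
    have hmF : mI ∈ ⋂ j ∈ J, Fface u c j := by
      refine Set.mem_iInter₂.mpr fun j hj => ⟨hmP, ?_⟩
      refine le_antisymm ?_ (hmP j)
      by_contra hc
      push_neg at hc
      obtain ⟨k, hk⟩ := exists_nat_one_div_lt hc
      have := (hmIk k).2 j hj
      push_cast at hk this
      linarith
    rw [hJ] at hmF
    exact hmF
  · push_neg at hne
    obtain ⟨k, hk⟩ := hne
    refine ⟨(1/(k+1) : ℝ), by positivity, ?_, ?_⟩
    · rw [div_le_one (by positivity)]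
      push_cast
      linarith [Nat.cast_nonneg (α := ℝ) k]
    · intro m hm
      have : m ∈ K k := ⟨hm.1, hm.2⟩
      rw [hk] at this
      exact this

lemma pointwise_zero (u : Fin r → Fin n → ℤ) (c : Fin r → ℤ) (J : Finset (Fin r))
    (g : (Fin n → ℝ) → ℝ) (δ₀ : ℝ) (hδ₀pos : 0 < δ₀) (h t : Fin r → ℝ)
    (hh : ∀ j, |h j| ≤ δ₀/2) (ht : ∀ j, 0 < t j ∧ t j ≤ δ₀/2)
    (m : Fin n → ℝ)
    (hK : ¬((∀ j, -δ₀ ≤ pairR m (u j) + (c j : ℝ)) ∧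
        ∀ j ∈ J, pairR m (u j) + (c j : ℝ) ≤ δ₀)) :
    ∑ S ∈ J.powerset, ((-1:ℝ)^S.card) •
      Set.indicator (Ph u c (fun j => h j + if j ∈ S then t j else 0)) g m = 0 := by
  classical
  set sl : Fin r → ℝ := fun j => pairR m (u j) + (c j : ℝ) with hsl
  set a : Fin r → ℝ := fun j => if 0 ≤ sl j + h j + t j then 1 else 0 with hadef
  set b : Fin r → ℝ := fun j => if 0 ≤ sl j + h j then 1 else 0 with hbdef
  set e : ℝ := if (∀ j, j ∉ J → 0 ≤ sl j + h j) then 1 else 0 with hedef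
  have hmem : ∀ S : Finset (Fin r),
      (m ∈ Ph u c (fun j => h j + if j ∈ S then t j else 0)) ↔
        ∀ j, 0 ≤ sl j + (h j + if j ∈ S then t j else 0) := by
    intro S
    constructor
    · intro hm j; have := hm j; dsimp only at this; simp only [hsl]; linarith
    · intro hm j; have := hm j; simp only [hsl] at this
      show 0 ≤ pairR m (u j) + (c j : ℝ) + (h j + if j ∈ S then t j else 0)
      linarith
  have claim1 : ∀ S ∈ J.powerset,
      Set.indicator (Ph u c (fun j => h j + if j ∈ S then t j else 0)) g m
        = (e * ((∏ j ∈ S, a j) * ∏ j ∈ J \ S, b j)) * g m := by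
    intro S hS
    have hSJ : S ⊆ J := Finset.mem_powerset.mp hS
    by_cases hm : m ∈ Ph u c (fun j => h j + if j ∈ S then t j else 0)
    · rw [Set.indicator_of_mem hm]
      have hall := (hmem S).mp hm
      have he1 : e = 1 := by
        rw [hedef, if_pos]
        intro j hj
        have := hall j
        rw [if_neg (fun hjS => hj (hSJ hjS))] at this
        linarith
      have hpa : ∏ j ∈ S, a j = 1 := by
        apply Finset.prod_eq_one
        intro j hj
        have := hall j
        rw [if_pos hj] at this
        rw [hadef]
        simp only []
        rw [if_pos (by linarith)]
      have hpb : ∏ j ∈ J \ S, b j = 1 := by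
        apply Finset.prod_eq_one
        intro j hj
        have hjS : j ∉ S := (Finset.mem_sdiff.mp hj).2
        have := hall j
        rw [if_neg hjS] at this
        rw [hbdef]
        simp only []
        rw [if_pos (by linarith)]
      rw [he1, hpa, hpb]
      ring
    · rw [Set.indicator_of_notMem hm]
      have : ¬ ∀ j, 0 ≤ sl j + (h j + if j ∈ S then t j else 0) := fun hc => hm ((hmem S).mpr hc)
      push_neg at this
      obtain ⟨j₀, hj₀⟩ := this
      by_cases hj₀S : j₀ ∈ S
      · rw [if_pos hj₀S] at hj₀
        have ha0 : a j₀ = 0 := by rw [hadef]; simp only []; rw [if_neg (by linarith)]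
        rw [Finset.prod_eq_zero hj₀S ha0]
        ring
      · rw [if_neg hj₀S] at hj₀
        by_cases hj₀J : j₀ ∈ J
        · have hb0 : b j₀ = 0 := by rw [hbdef]; simp only []; rw [if_neg (by linarith)]
          rw [Finset.prod_eq_zero (Finset.mem_sdiff.mpr ⟨hj₀J, hj₀S⟩) hb0]
          ring
        · have he0 : e = 0 := by
            rw [hedef, if_neg]
            push_neg
            exact ⟨j₀, hj₀J, by linarith⟩
          rw [he0]
          ring
  have hneg : ∀ S : Finset (Fin r), ∏ j ∈ S, (-(a j)) = (-1:ℝ)^S.card * ∏ j ∈ S, a j := by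
    intro S
    calc ∏ j ∈ S, (-(a j)) = ∏ j ∈ S, ((-1) * a j) := by
          refine Finset.prod_congr rfl fun j _ => by ring
      _ = (∏ _j ∈ S, (-1:ℝ)) * ∏ j ∈ S, a j := Finset.prod_mul_distrib
      _ = (-1:ℝ)^S.card * ∏ j ∈ S, a j := by rw [Finset.prod_const]
  have hsum : ∑ S ∈ J.powerset, ((-1:ℝ)^S.card) •
      Set.indicator (Ph u c (fun j => h j + if j ∈ S then t j else 0)) g m
      = (e * g m) * ∏ j ∈ J, (-(a j) + b j) := by
    rw [Finset.prod_add]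
    rw [Finset.mul_sum]
    refine Finset.sum_congr rfl fun S hS => ?_
    rw [claim1 S hS, hneg S, smul_eq_mul]
    ring
  rw [hsum]
  by_cases he : ∀ j, j ∉ J → 0 ≤ sl j + h j
  · have hprod : ∏ j ∈ J, (-(a j) + b j) = 0 := by
      by_contra hne
      have hfac : ∀ j ∈ J, (-(a j) + b j) ≠ 0 :=
        fun j hj h0 => hne (Finset.prod_eq_zero hj h0)
      have hcond : ∀ j ∈ J, (0 ≤ sl j + h j + t j) ∧ ¬(0 ≤ sl j + h j) := by
        intro j hj
        have hf := hfac j hj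
        by_cases hbj : 0 ≤ sl j + h j
        · exfalso
          have haj : 0 ≤ sl j + h j + t j := by linarith [(ht j).1]
          apply hf
          rw [hadef, hbdef]
          simp only []
          rw [if_pos haj, if_pos hbj]
          ring
        · refine ⟨?_, hbj⟩
          by_contra haj
          apply hf
          rw [hadef, hbdef]
          simp only []
          rw [if_neg haj, if_neg hbj]
          ring
      apply hK
      constructor
      · intro j
        by_cases hj : j ∈ J
        · have := (hcond j hj).1
          have h1 := hh j
          have h2 := (ht j).2
          have h3 := abs_le.mp h1
          simp only [hsl] at this ⊢
          linarith [h3.1, h3.2]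
        · have := he j hj
          have h3 := abs_le.mp (hh j)
          simp only [hsl] at this ⊢
          linarith [h3.1]
      · intro j hj
        have := (hcond j hj).2
        push_neg at this
        have h3 := abs_le.mp (hh j)
        simp only [hsl] at this ⊢
        linarith [h3.2]
    rw [hprod]
    ring
  · have he0 : e = 0 := by rw [hedef, if_neg he]
    rw [he0]
    ring

end S12

/-- Let `P` be a full-dimensional simple lattice polytope with facet
presentation `P = {m : ⟨m,uⱼ⟩ + cⱼ ≥ 0}` and facets `F₁,…,F_r`, let `f` be a polynomial on
`ℝ^n` and `q_f` the polynomial agreeing with `h ↦ ∫_{P(h)} f dλ` near `0`.  If the pairwise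
distinct indices `j₁,…,j_k` (the finset `J`) correspond to facets with empty intersection,
then the mixed partial derivative `(∂/∂h_{j₁}) ⋯ (∂/∂h_{j_k}) q_f` is the zero polynomial. -/
theorem stmt12 (n r : ℕ) (u : Fin r → Fin n → ℤ) (c : Fin r → ℤ)
    (hlat : ∃ S : Finset (Fin n → ℤ), Pset u c = convexHull ℝ (castZ '' ↑S))
    (hfull : (interior (Pset u c)).Nonempty)
    (hprim : ∀ j, Finset.univ.gcd (u j) = 1)
    (hfacet : ∀ j, Module.finrank ℝ (affineSpan ℝ (Fface u c j)).direction = n - 1)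
    (hinj : Function.Injective (Fface u c))
    (hsimp : ∀ m ∈ Pset u c,
      LinearIndependent ℝ
        (fun j : {j : Fin r // pairR m (u j) + (c j : ℝ) = 0} => castZ (u j.1)))
    (f : MvPolynomial (Fin n) ℝ) (q : MvPolynomial (Fin r) ℝ)
    (hq : ∀ᶠ h in nhds (0 : Fin r → ℝ),
      MvPolynomial.eval h q = ∫ m in Ph u c h, MvPolynomial.eval m f ∂volume)
    (J : Finset (Fin r)) (hJ : (⋂ j ∈ J, Fface u c j) = (∅ : Set (Fin n → ℝ))) :
    pderivMulti (fun j => if j ∈ J then 1 else 0) q = 0 := by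
  classical
  have hJne : J.Nonempty := by
    rcases J.eq_empty_or_nonempty with hJe | hne
    · exfalso
      have h0 : (0 : Fin n → ℝ) ∈ ⋂ j ∈ J, Fface u c j := by
        rw [hJe]; simp
      rw [hJ] at h0
      exact h0
    · exact hne
  have hr : 0 < r := by
    obtain ⟨j, _⟩ := hJne
    exact lt_of_le_of_lt (Nat.zero_le _) j.isLt
  obtain ⟨R₁, hR₁⟩ := S12.Ph_bounded u c hlat hfull hprim hr
  obtain ⟨δ₀, hδ₀pos, hδ₀le1, hδ₀⟩ := S12.exists_delta0 u c J hJ hR₁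
  obtain ⟨δ₁, hδ₁pos, hδ₁⟩ := Metric.eventually_nhds_iff.mp hq
  set δ : ℝ := min (min (δ₀/2) (δ₁/2)) (1/2) with hδdef
  have hδpos : 0 < δ :=
    lt_min (lt_min (by linarith) (by linarith)) (by norm_num)
  have hδδ₀ : δ ≤ δ₀/2 := le_trans (min_le_left _ _) (min_le_left _ _)
  have hδδ₁ : δ ≤ δ₁/2 := le_trans (min_le_left _ _) (min_le_right _ _)
  have hδhalf : δ ≤ 1/2 := min_le_right _ _
  set U : Set ((Fin r ⊕ Fin r) → ℝ) :=
    {x | ∀ j : Fin r, |x (Sum.inl j)| < δ ∧ 0 < x (Sum.inr j) ∧ x (Sum.inr j) < δ} with hUdef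
  have hUopen : IsOpen U := by
    have hU2 : U = ⋂ j : Fin r, ({x : (Fin r ⊕ Fin r) → ℝ | |x (Sum.inl j)| < δ}
        ∩ ({x | 0 < x (Sum.inr j)} ∩ {x | x (Sum.inr j) < δ})) := by
      ext x; simp [hUdef, Set.mem_iInter, and_assoc]
    rw [hU2]
    refine isOpen_iInter_of_finite fun j => ?_
    refine IsOpen.inter ?_ (IsOpen.inter ?_ ?_)
    · exact isOpen_lt (continuous_apply (Sum.inl j)).abs continuous_const
    · exact isOpen_lt continuous_const (continuous_apply (Sum.inr j))
    · exact isOpen_lt (continuous_apply (Sum.inr j)) continuous_const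
  have hUne : U.Nonempty := by
    refine ⟨Sum.elim (fun _ => 0) (fun _ => δ/2), fun j => ⟨?_, ?_, ?_⟩⟩
    · simpa using hδpos
    · simpa using by linarith
    · simpa using by linarith
  set Q : MvPolynomial (Fin r ⊕ Fin r) ℝ :=
    ∑ S ∈ J.powerset, MvPolynomial.C ((-1:ℝ)^S.card) * MvPolynomial.bind₁ (S12.shiftS S) q
    with hQdef
  have hQzero : ∀ x ∈ U, MvPolynomial.eval x Q = 0 := by
    intro x hx
    have hx' : ∀ j : Fin r, |x (Sum.inl j)| < δ ∧ 0 < x (Sum.inr j) ∧ x (Sum.inr j) < δ := hx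
    set h : Fin r → ℝ := fun j => x (Sum.inl j) with hhdef
    set t : Fin r → ℝ := fun j => x (Sum.inr j) with htdef
    have hhb : ∀ j, |h j| < δ := fun j => (hx' j).1
    have htb : ∀ j, 0 < t j ∧ t j < δ := fun j => ⟨(hx' j).2.1, (hx' j).2.2⟩
    have hzb : ∀ (S : Finset (Fin r)) (j : Fin r),
        |h j + if j ∈ S then t j else 0| < 2*δ := by
      intro S j
      have h1 := hhb j
      have h2 := htb j
      by_cases hjS : j ∈ S
      · rw [if_pos hjS]
        calc |h j + t j| ≤ |h j| + |t j| := abs_add_le _ _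
          _ < 2*δ := by rw [abs_of_pos h2.1]; linarith
      · rw [if_neg hjS]; rw [add_zero]; linarith
    -- the measure-theoretic input
    have hint : ∀ S : Finset (Fin r),
        MvPolynomial.eval (fun j => h j + if j ∈ S then t j else 0) q
          = ∫ m in Ph u c (fun j => h j + if j ∈ S then t j else 0),
              MvPolynomial.eval m f ∂volume := by
      intro S
      apply hδ₁
      rw [dist_pi_lt_iff hδ₁pos]
      intro j
      simp only [Pi.zero_apply, Real.dist_eq, sub_zero]
      calc |h j + if j ∈ S then t j else 0| < 2*δ := hzb S j
        _ ≤ δ₁ := by linarith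
    have heval : MvPolynomial.eval x Q
        = ∑ S ∈ J.powerset, ((-1:ℝ)^S.card) •
            ∫ m in Ph u c (fun j => h j + if j ∈ S then t j else 0),
              MvPolynomial.eval m f ∂volume := by
      rw [hQdef, map_sum]
      refine Finset.sum_congr rfl fun S hS => ?_
      rw [map_mul, MvPolynomial.eval_C, S12.eval_bind₁, smul_eq_mul]
      have harg : (fun i => MvPolynomial.eval x (S12.shiftS S i))
          = fun j => h j + if j ∈ S then t j else 0 := by
        funext i
        simp [S12.shiftS, apply_ite (MvPolynomial.eval x), hhdef, htdef]
      rw [harg, hint S]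
    -- compactness and integrability
    have hAcl : ∀ S : Finset (Fin r),
        IsClosed (Ph u c (fun j => h j + if j ∈ S then t j else 0)) :=
      fun S => S12.isClosed_Ph u c _
    have hAsub : ∀ S : Finset (Fin r),
        Ph u c (fun j => h j + if j ∈ S then t j else 0) ⊆ Metric.closedBall 0 R₁ := by
      intro S
      refine hR₁ _ fun j => ?_
      have := hzb S j
      have h2 := abs_le.mp (le_of_lt this)
      linarith [h2.2]
    have hAint : ∀ S : Finset (Fin r),
        IntegrableOn (fun m => MvPolynomial.eval m f)
          (Ph u c (fun j => h j + if j ∈ S then t j else 0)) volume := by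
      intro S
      have hcpt : IsCompact (Ph u c (fun j => h j + if j ∈ S then t j else 0)) :=
        (isCompact_closedBall (0 : Fin n → ℝ) R₁).of_isClosed_subset (hAcl S) (hAsub S)
      exact (S12.continuous_evalP f).continuousOn.integrableOn_compact hcpt
    have hindint : ∀ S ∈ J.powerset,
        Integrable (fun m => ((-1:ℝ)^S.card) •
          Set.indicator (Ph u c (fun j => h j + if j ∈ S then t j else 0))
            (fun m' => MvPolynomial.eval m' f) m) volume := by
      intro S _
      exact MeasureTheory.Integrable.smul ((-1:ℝ)^S.card)
        ((hAint S).integrable_indicator (hAcl S).measurableSet)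
    rw [heval]
    calc ∑ S ∈ J.powerset, ((-1:ℝ)^S.card) •
          ∫ m in Ph u c (fun j => h j + if j ∈ S then t j else 0),
            MvPolynomial.eval m f ∂volume
        = ∑ S ∈ J.powerset, ∫ m, ((-1:ℝ)^S.card) •
            Set.indicator (Ph u c (fun j => h j + if j ∈ S then t j else 0))
              (fun m' => MvPolynomial.eval m' f) m ∂volume := by
          refine Finset.sum_congr rfl fun S hS => ?_
          rw [← MeasureTheory.integral_indicator (hAcl S).measurableSet,
            ← MeasureTheory.integral_smul]
      _ = ∫ m, ∑ S ∈ J.powerset, ((-1:ℝ)^S.card) •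
            Set.indicator (Ph u c (fun j => h j + if j ∈ S then t j else 0))
              (fun m' => MvPolynomial.eval m' f) m ∂volume :=
          (MeasureTheory.integral_finset_sum _ hindint).symm
      _ = 0 := by
          have hptw : ∀ m : Fin n → ℝ,
              ∑ S ∈ J.powerset, ((-1:ℝ)^S.card) •
                Set.indicator (Ph u c (fun j => h j + if j ∈ S then t j else 0))
                  (fun m' => MvPolynomial.eval m' f) m = 0 := by
            intro m
            refine S12.pointwise_zero u c J _ δ₀ hδ₀pos h t
              (fun j => by have := hhb j; linarith)
              (fun j => ⟨(htb j).1, by have := (htb j).2; linarith⟩) m (hδ₀ m)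
          simp only [hptw]
          exact MeasureTheory.integral_zero _ _
  have hQ0 : Q = 0 := S12.eq_zero_of_eval_zero_on_open Q hUopen hUne hQzero
  have hkey := S12.key_alg J q (by rw [← hQdef]; exact hQ0)
  have hb := S12.pderivMulti_bridge J (List.finRange r) q
  exact hb.trans hkey
end
end
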